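/- arXiv:2010.01306 — 7 statements merged into one kernel-verified Lean document; each statement's English description precedes it below -/
import Mathlib

section
/- In the single-item uncapacitated lot-sizing relaxation for a facility i, the (l,S)-inequality holds: for any period l, any subset S of {1,...,l}, and any feasible solution (x, s, y) with s_0 = 0, inventory balance s_{t-1} + x_t = d_t + s_t for all t, nonnegativity of x and s, and the setup condition x_t ≤ (d_t + d_{t+1} + ... + d_{NT}) · y_t with y_t ∈ {0,1}, one has Σ_{k ∈ {1,...,l}\S} x_k + Σ_{k ∈ S} (d_k + ... + d_l) · y_k ≥ d_1 + ... + d_l. -/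
open Finset

/-- The `(l,S)`-inequality is valid for the uncapacitated single-item lot-sizing set. -/
theorem lS_inequality_valid
    (NT : ℕ) (d x s y : ℕ → ℝ)
    (hd : ∀ t ∈ Icc 1 NT, 0 ≤ d t)
    (hs0 : s 0 = 0)
    (hbal : ∀ t ∈ Icc 1 NT, s (t - 1) + x t = d t + s t)
    (hx : ∀ t ∈ Icc 1 NT, 0 ≤ x t)
    (hs : ∀ t ∈ Icc 1 NT, 0 ≤ s t)
    (hy : ∀ t ∈ Icc 1 NT, y t = 0 ∨ y t = 1)
    (hsetup : ∀ t ∈ Icc 1 NT, x t ≤ (∑ j ∈ Icc t NT, d j) * y t)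
    (l : ℕ) (hl : l ∈ Icc 1 NT) (S : Finset ℕ) (hS : S ⊆ Icc 1 l) :
    ∑ k ∈ Icc 1 l \ S, x k + ∑ k ∈ S, (∑ j ∈ Icc k l, d j) * y k
      ≥ ∑ k ∈ Icc 1 l, d k := by
  simp only [mem_Icc] at hl
  obtain ⟨hl1, hlNT⟩ := hl
  -- key: cumulative production
  have key : ∀ m, m ≤ NT → ∑ j ∈ Icc 1 m, x j = ∑ j ∈ Icc 1 m, d j + s m := by
    intro m
    induction m with
    | zero => intro _; simp [hs0]
    | succ n ih =>
      intro h
      have hn := ih (Nat.le_of_succ_le h)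
      rw [Finset.sum_Icc_succ_top (Nat.succ_le_succ (Nat.zero_le n)),
          Finset.sum_Icc_succ_top (Nat.succ_le_succ (Nat.zero_le n)), hn]
      have hb := hbal (n+1) (by simp [mem_Icc]; omega)
      simp only [Nat.add_sub_cancel] at hb
      linarith
  -- x vanishes when y = 0
  have hx0 : ∀ k ∈ Icc 1 NT, y k = 0 → x k = 0 := by
    intro k hk hyk
    have h1 := hsetup k hk
    have h2 := hx k hk
    rw [hyk, mul_zero] at h1
    linarith
  have hsubl : Icc 1 l ⊆ Icc 1 NT := Icc_subset_Icc_right hlNT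
  by_cases hT : ∀ k ∈ S, y k = 0
  · have hxS : ∀ k ∈ S, x k = 0 := fun k hk =>
      hx0 k (hsubl (hS hk)) (hT k hk)
    have e1 : ∑ k ∈ Icc 1 l \ S, x k = ∑ k ∈ Icc 1 l, x k :=
      Finset.sum_subset sdiff_subset (by
        intro k hk hk2
        simp only [mem_sdiff, hk, true_and, not_not] at hk2
        exact hxS k hk2)
    have e2 : ∑ k ∈ S, (∑ j ∈ Icc k l, d j) * y k = 0 :=
      Finset.sum_eq_zero fun k hk => by rw [hT k hk, mul_zero]
    rw [e1, e2, key l hlNT]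
    have := hs l (by simp [mem_Icc]; omega)
    linarith
  · push_neg at hT
    obtain ⟨t0, ht0S, ht0y⟩ := hT
    set T := S.filter (fun k => y k = 1) with hTdef
    have hty1 : y t0 = 1 := by
      rcases hy t0 (hsubl (hS ht0S)) with h | h
      · exact absurd h ht0y
      · exact h
    have hTne : T.Nonempty := ⟨t0, by simp [hTdef, ht0S, hty1]⟩
    set t := T.min' hTne with htdef
    have htT : t ∈ T := T.min'_mem hTne
    have htS : t ∈ S := (mem_filter.mp htT).1
    have hty : y t = 1 := (mem_filter.mp htT).2
    have htl := hS htS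
    simp only [mem_Icc] at htl
    have hx0S : ∀ k ∈ S, k < t → x k = 0 := by
      intro k hk hkt
      apply hx0 k (hsubl (hS hk))
      rcases hy k (hsubl (hS hk)) with h | h
      · exact h
      · exfalso
        have hkT : k ∈ T := mem_filter.mpr ⟨hk, h⟩
        have := T.min'_le k hkT
        omega
    have h2 : ∑ k ∈ S, (∑ j ∈ Icc k l, d j) * y k ≥ ∑ j ∈ Icc t l, d j := by
      have hle := Finset.single_le_sum (f := fun k => (∑ j ∈ Icc k l, d j) * y k)
        (fun k hk => by
          apply mul_nonneg
          · apply Finset.sum_nonneg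
            intro j hj
            apply hd
            simp only [mem_Icc] at hj ⊢
            have hkl := hS hk; simp only [mem_Icc] at hkl
            omega
          · rcases hy k (hsubl (hS hk)) with h | h <;> simp [h])
        htS
      simp only [hty, mul_one] at hle
      exact hle
    have h1 : ∑ k ∈ Icc 1 l \ S, x k ≥ ∑ k ∈ Icc 1 (t-1), x k := by
      have e : ∑ k ∈ Icc 1 (t-1) \ S, x k = ∑ k ∈ Icc 1 (t-1), x k :=
        Finset.sum_subset sdiff_subset (by
          intro k hk hk2
          simp only [mem_sdiff, hk, true_and, not_not] at hk2
          simp only [mem_Icc] at hk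
          exact hx0S k hk2 (by omega))
      rw [← e]
      apply Finset.sum_le_sum_of_subset_of_nonneg
      · exact sdiff_subset_sdiff (Icc_subset_Icc_right (by omega)) (le_refl S)
      · intro k hk _
        exact hx k (hsubl (mem_sdiff.mp hk).1)
    have h3 : ∑ k ∈ Icc 1 (t-1), x k = ∑ j ∈ Icc 1 (t-1), d j + s (t-1) :=
      key (t-1) (by omega)
    have hst : 0 ≤ s (t-1) := by
      rcases Nat.lt_or_ge 1 t with h | h
      · exact hs (t-1) (by simp only [mem_Icc]; omega)
      · have ht1 : t = 1 := by omega
        simp [ht1, hs0]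
    have hsplit : ∑ j ∈ Icc 1 (t-1), d j + ∑ j ∈ Icc t l, d j = ∑ j ∈ Icc 1 l, d j := by
      rw [← Finset.Ico_add_one_right_eq_Icc 1 (t-1), ← Finset.Ico_add_one_right_eq_Icc t l,
          ← Finset.Ico_add_one_right_eq_Icc 1 l]
      have ht' : t - 1 + 1 = t := by omega
      rw [ht']
      exact Finset.sum_Ico_consecutive d (by omega) (by omega)
    linarith
end

section
/- The optimal value of the linear relaxation of the standard formulation strengthened with the single-level, two-level, and three-level valid inequalities (STD+) is at most the optimal value of the linear relaxation of the extended three-level formulation strengthened with its corresponding single-level, two-level, and three-level inequalities (3LF+): z_STD+ ≤ z_3LF+. -/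
open Finset

/-- Data of an instance of the uncapacitated three-level lot-sizing and
replenishment problem with a distribution structure. -/
structure LSData where
  W : Type
  R : Type
  fW : Fintype W
  fR : Fintype R
  deW : DecidableEq W
  wOf : R → W
  NT : ℕ
  d : R → ℕ → ℝ
  scP : ℕ → ℝ
  hcP : ℕ → ℝ
  scW : W → ℕ → ℝ
  hcW : W → ℕ → ℝ
  scR : R → ℕ → ℝ
  hcR : R → ℕ → ℝ

attribute [instance] LSData.fW LSData.fR LSData.deW

/-- Retailers served by warehouse `w`. -/
def LSData.ret (I : LSData) (w : I.W) : Finset I.R :=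
  Finset.univ.filter (fun r => I.wOf r = w)

/-- Cumulative demand of retailer `r` over periods `k..l`. -/
def LSData.dcR (I : LSData) (r : I.R) (k l : ℕ) : ℝ := ∑ j ∈ Icc k l, I.d r j

/-- Cumulative derived demand of warehouse `w` over periods `k..l`. -/
def LSData.dcW (I : LSData) (w : I.W) (k l : ℕ) : ℝ := ∑ r ∈ I.ret w, I.dcR r k l

/-- Cumulative derived demand of the plant over periods `k..l`. -/
def LSData.dcP (I : LSData) (k l : ℕ) : ℝ := ∑ r, I.dcR r k l

/-- A point in the variable space of the standard formulation. -/
structure STDPoint (I : LSData) where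
  xP : ℕ → ℝ
  sP : ℕ → ℝ
  yP : ℕ → ℝ
  xW : I.W → ℕ → ℝ
  sW : I.W → ℕ → ℝ
  yW : I.W → ℕ → ℝ
  xR : I.R → ℕ → ℝ
  sR : I.R → ℕ → ℝ
  yR : I.R → ℕ → ℝ

/-- Feasibility for the LP relaxation of the standard formulation STD. -/
def STDFeasLP (I : LSData) (p : STDPoint I) : Prop :=
  p.sP 0 = 0 ∧ (∀ w, p.sW w 0 = 0) ∧ (∀ r, p.sR r 0 = 0) ∧
  (∀ t ∈ Icc 1 I.NT, p.sP (t - 1) + p.xP t = (∑ w, p.xW w t) + p.sP t) ∧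
  (∀ w, ∀ t ∈ Icc 1 I.NT,
    p.sW w (t - 1) + p.xW w t = (∑ r ∈ I.ret w, p.xR r t) + p.sW w t) ∧
  (∀ r, ∀ t ∈ Icc 1 I.NT, p.sR r (t - 1) + p.xR r t = I.d r t + p.sR r t) ∧
  (∀ t ∈ Icc 1 I.NT, p.xP t ≤ I.dcP t I.NT * p.yP t) ∧
  (∀ w, ∀ t ∈ Icc 1 I.NT, p.xW w t ≤ I.dcW w t I.NT * p.yW w t) ∧
  (∀ r, ∀ t ∈ Icc 1 I.NT, p.xR r t ≤ I.dcR r t I.NT * p.yR r t) ∧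
  (∀ t ∈ Icc 1 I.NT, 0 ≤ p.xP t ∧ 0 ≤ p.sP t ∧ 0 ≤ p.yP t ∧ p.yP t ≤ 1) ∧
  (∀ w, ∀ t ∈ Icc 1 I.NT, 0 ≤ p.xW w t ∧ 0 ≤ p.sW w t ∧ 0 ≤ p.yW w t ∧ p.yW w t ≤ 1) ∧
  (∀ r, ∀ t ∈ Icc 1 I.NT, 0 ≤ p.xR r t ∧ 0 ≤ p.sR r t ∧ 0 ≤ p.yR r t ∧ p.yR r t ≤ 1)

/-- The single-level valid inequalities for the standard formulation. -/
def STDSingle (I : LSData) (p : STDPoint I) : Prop :=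
  (∀ l ∈ Icc 1 I.NT, ∀ S ⊆ Icc 1 l,
    ∑ k ∈ Icc 1 l \ S, p.xP k + ∑ k ∈ S, I.dcP k l * p.yP k ≥ I.dcP 1 l) ∧
  (∀ w, ∀ l ∈ Icc 1 I.NT, ∀ S ⊆ Icc 1 l,
    ∑ k ∈ Icc 1 l \ S, p.xW w k + ∑ k ∈ S, I.dcW w k l * p.yW w k ≥ I.dcW w 1 l) ∧
  (∀ r, ∀ l ∈ Icc 1 I.NT, ∀ S ⊆ Icc 1 l,
    ∑ k ∈ Icc 1 l \ S, p.xR r k + ∑ k ∈ S, I.dcR r k l * p.yR r k ≥ I.dcR r 1 l)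

/-- The two-level valid inequalities for the standard formulation. -/
def STDTwo (I : LSData) (p : STDPoint I) : Prop :=
  (∀ l ∈ Icc 2 I.NT, ∀ li, 1 ≤ li → li < l → ∀ Sp ⊆ Icc 1 li,
    ∀ Sw : I.W → Finset ℕ, (∀ w, Sw w ⊆ Icc (li + 1) l) →
    ∑ k ∈ Icc 1 li \ Sp, p.xP k + ∑ k ∈ Sp, I.dcP k l * p.yP k
      + ∑ w, (∑ k ∈ Icc (li + 1) l \ Sw w, p.xW w k + ∑ k ∈ Sw w, I.dcW w k l * p.yW w k)
      ≥ I.dcP 1 l) ∧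
  (∀ l ∈ Icc 2 I.NT, ∀ li, 1 ≤ li → li < l → ∀ Sp ⊆ Icc 1 li,
    ∀ Sr : I.R → Finset ℕ, (∀ r, Sr r ⊆ Icc (li + 1) l) →
    ∑ k ∈ Icc 1 li \ Sp, p.xP k + ∑ k ∈ Sp, I.dcP k l * p.yP k
      + ∑ r, (∑ k ∈ Icc (li + 1) l \ Sr r, p.xR r k + ∑ k ∈ Sr r, I.dcR r k l * p.yR r k)
      ≥ I.dcP 1 l) ∧
  (∀ w, ∀ l ∈ Icc 2 I.NT, ∀ li, 1 ≤ li → li < l → ∀ Sw ⊆ Icc 1 li,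
    ∀ Sr : I.R → Finset ℕ, (∀ r, Sr r ⊆ Icc (li + 1) l) →
    ∑ k ∈ Icc 1 li \ Sw, p.xW w k + ∑ k ∈ Sw, I.dcW w k l * p.yW w k
      + ∑ r ∈ I.ret w,
          (∑ k ∈ Icc (li + 1) l \ Sr r, p.xR r k + ∑ k ∈ Sr r, I.dcR r k l * p.yR r k)
      ≥ I.dcW w 1 l)

/-- The three-level valid inequalities for the standard formulation. -/
def STDThree (I : LSData) (p : STDPoint I) : Prop :=
  ∀ l ∈ Icc 3 I.NT, ∀ lp lw, 1 ≤ lp → lp + 2 ≤ l → lp < lw → lw + 1 ≤ l →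
    ∀ Sp ⊆ Icc 1 lp,
    ∀ Sw : I.W → Finset ℕ, (∀ w, Sw w ⊆ Icc (lp + 1) lw) →
    ∀ Sr : I.R → Finset ℕ, (∀ r, Sr r ⊆ Icc (lw + 1) l) →
    ∑ k ∈ Icc 1 lp \ Sp, p.xP k + ∑ k ∈ Sp, I.dcP k l * p.yP k
      + ∑ w, (∑ k ∈ Icc (lp + 1) lw \ Sw w, p.xW w k + ∑ k ∈ Sw w, I.dcW w k l * p.yW w k)
      + ∑ r, (∑ k ∈ Icc (lw + 1) l \ Sr r, p.xR r k + ∑ k ∈ Sr r, I.dcR r k l * p.yR r k)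
      ≥ I.dcP 1 l

/-- Objective function of the standard formulation. -/
def STDObj (I : LSData) (p : STDPoint I) : ℝ :=
  ∑ t ∈ Icc 1 I.NT,
    (I.scP t * p.yP t + (∑ w, I.scW w t * p.yW w t) + (∑ r, I.scR r t * p.yR r t)
      + I.hcP t * p.sP t + (∑ w, I.hcW w t * p.sW w t) + (∑ r, I.hcR r t * p.sR r t))

/-- A point in the variable space of the extended three-level formulation 3LF. -/
structure TLFPoint (I : LSData) where
  x0 : I.R → ℕ → ℝ
  x1 : I.R → ℕ → ℝ
  x2 : I.R → ℕ → ℝ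
  s0 : I.R → ℕ → ℝ
  s1 : I.R → ℕ → ℝ
  s2 : I.R → ℕ → ℝ
  yP : ℕ → ℝ
  yW : I.W → ℕ → ℝ
  yR : I.R → ℕ → ℝ

/-- Feasibility for the LP relaxation of the extended formulation 3LF. -/
def TLFFeasLP (I : LSData) (q : TLFPoint I) : Prop :=
  (∀ r, q.s0 r 0 = 0 ∧ q.s1 r 0 = 0 ∧ q.s2 r 0 = 0) ∧
  (∀ r, ∀ t ∈ Icc 1 I.NT, q.s0 r (t - 1) + q.x0 r t = q.x1 r t + q.s0 r t) ∧
  (∀ r, ∀ t ∈ Icc 1 I.NT, q.s1 r (t - 1) + q.x1 r t = q.x2 r t + q.s1 r t) ∧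
  (∀ r, ∀ t ∈ Icc 1 I.NT, q.s2 r (t - 1) + q.x2 r t = I.d r t + q.s2 r t) ∧
  (∀ r, ∀ t ∈ Icc 1 I.NT, q.x0 r t ≤ I.dcR r t I.NT * q.yP t) ∧
  (∀ r, ∀ t ∈ Icc 1 I.NT, q.x1 r t ≤ I.dcR r t I.NT * q.yW (I.wOf r) t) ∧
  (∀ r, ∀ t ∈ Icc 1 I.NT, q.x2 r t ≤ I.dcR r t I.NT * q.yR r t) ∧
  (∀ r, ∀ t ∈ Icc 1 I.NT,
    0 ≤ q.x0 r t ∧ 0 ≤ q.x1 r t ∧ 0 ≤ q.x2 r t ∧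
    0 ≤ q.s0 r t ∧ 0 ≤ q.s1 r t ∧ 0 ≤ q.s2 r t) ∧
  (∀ t ∈ Icc 1 I.NT, 0 ≤ q.yP t ∧ q.yP t ≤ 1) ∧
  (∀ w, ∀ t ∈ Icc 1 I.NT, 0 ≤ q.yW w t ∧ q.yW w t ≤ 1) ∧
  (∀ r, ∀ t ∈ Icc 1 I.NT, 0 ≤ q.yR r t ∧ q.yR r t ≤ 1)

/-- The per-retailer single-level inequalities for 3LF. -/
def TLFSingle (I : LSData) (q : TLFPoint I) : Prop :=
  ∀ r, ∀ l ∈ Icc 1 I.NT, ∀ S ⊆ Icc 1 l,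
    (∑ k ∈ Icc 1 l \ S, q.x0 r k + ∑ k ∈ S, I.dcR r k l * q.yP k ≥ I.dcR r 1 l) ∧
    (∑ k ∈ Icc 1 l \ S, q.x1 r k + ∑ k ∈ S, I.dcR r k l * q.yW (I.wOf r) k ≥ I.dcR r 1 l) ∧
    (∑ k ∈ Icc 1 l \ S, q.x2 r k + ∑ k ∈ S, I.dcR r k l * q.yR r k ≥ I.dcR r 1 l)

/-- The per-retailer two-level inequalities for 3LF. -/
def TLFTwo (I : LSData) (q : TLFPoint I) : Prop :=
  ∀ r, ∀ l ∈ Icc 2 I.NT, ∀ lb, 1 ≤ lb → lb < l →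
    ∀ Sb ⊆ Icc 1 lb, ∀ Sb' ⊆ Icc (lb + 1) l,
    (∑ k ∈ Icc 1 lb \ Sb, q.x0 r k + ∑ k ∈ Sb, I.dcR r k l * q.yP k
      + ∑ k ∈ Icc (lb + 1) l \ Sb', q.x1 r k
      + ∑ k ∈ Sb', I.dcR r k l * q.yW (I.wOf r) k ≥ I.dcR r 1 l) ∧
    (∑ k ∈ Icc 1 lb \ Sb, q.x0 r k + ∑ k ∈ Sb, I.dcR r k l * q.yP k
      + ∑ k ∈ Icc (lb + 1) l \ Sb', q.x2 r k
      + ∑ k ∈ Sb', I.dcR r k l * q.yR r k ≥ I.dcR r 1 l) ∧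
    (∑ k ∈ Icc 1 lb \ Sb, q.x1 r k + ∑ k ∈ Sb, I.dcR r k l * q.yW (I.wOf r) k
      + ∑ k ∈ Icc (lb + 1) l \ Sb', q.x2 r k
      + ∑ k ∈ Sb', I.dcR r k l * q.yR r k ≥ I.dcR r 1 l)

/-- The per-retailer three-level inequalities for 3LF. -/
def TLFThree (I : LSData) (q : TLFPoint I) : Prop :=
  ∀ r, ∀ l ∈ Icc 3 I.NT, ∀ l0 l1, 1 ≤ l0 → l0 + 2 ≤ l → l0 < l1 → l1 + 1 ≤ l →
    ∀ S0 ⊆ Icc 1 l0, ∀ S1 ⊆ Icc (l0 + 1) l1, ∀ S2 ⊆ Icc (l1 + 1) l,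
    ∑ k ∈ Icc 1 l0 \ S0, q.x0 r k + ∑ k ∈ S0, I.dcR r k l * q.yP k
      + ∑ k ∈ Icc (l0 + 1) l1 \ S1, q.x1 r k
      + ∑ k ∈ S1, I.dcR r k l * q.yW (I.wOf r) k
      + ∑ k ∈ Icc (l1 + 1) l \ S2, q.x2 r k + ∑ k ∈ S2, I.dcR r k l * q.yR r k
      ≥ I.dcR r 1 l

/-- Objective function of the extended formulation 3LF. -/
def TLFObj (I : LSData) (q : TLFPoint I) : ℝ :=
  ∑ t ∈ Icc 1 I.NT,
    (I.scP t * q.yP t + (∑ w, I.scW w t * q.yW w t) + (∑ r, I.scR r t * q.yR r t)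
      + (∑ r, I.hcP t * q.s0 r t) + (∑ r, I.hcW (I.wOf r) t * q.s1 r t)
      + (∑ r, I.hcR r t * q.s2 r t))

/-- Aggregation map from a 3LF point to an STD point. -/
def toSTD (I : LSData) (q : TLFPoint I) : STDPoint I where
  xP := fun t => ∑ r, q.x0 r t
  sP := fun t => ∑ r, q.s0 r t
  yP := q.yP
  xW := fun w t => ∑ r ∈ I.ret w, q.x1 r t
  sW := fun w t => ∑ r ∈ I.ret w, q.s1 r t
  yW := q.yW
  xR := q.x2
  sR := q.s2
  yR := q.yR

lemma retW (I : LSData) (w : I.W) (r : I.R) (hr : r ∈ I.ret w) : I.wOf r = w :=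
  (Finset.mem_filter.mp hr).2

lemma fiber (I : LSData) (f : I.R → ℝ) :
    ∑ w, ∑ r ∈ I.ret w, f r = ∑ r, f r := by
  simp only [LSData.ret]
  exact Finset.sum_fiberwise _ _ _

lemma block_eq (I : LSData) (s : Finset I.R) (A S : Finset ℕ) (l : ℕ)
    (x : I.R → ℕ → ℝ) (y : ℕ → ℝ) :
    ∑ r ∈ s, (∑ k ∈ A, x r k + ∑ k ∈ S, I.dcR r k l * y k)
      = (∑ k ∈ A, ∑ r ∈ s, x r k) + ∑ k ∈ S, (∑ r ∈ s, I.dcR r k l) * y k := by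
  rw [Finset.sum_add_distrib]
  congr 1
  · exact Finset.sum_comm
  · rw [Finset.sum_comm]
    exact Finset.sum_congr rfl fun k _ => (Finset.sum_mul _ _ _).symm

lemma block_eq' (I : LSData) (w : I.W) (A S : Finset ℕ) (l : ℕ)
    (x : I.R → ℕ → ℝ) (yw : I.W → ℕ → ℝ) :
    ∑ r ∈ I.ret w, (∑ k ∈ A, x r k + ∑ k ∈ S, I.dcR r k l * yw (I.wOf r) k)
      = (∑ k ∈ A, ∑ r ∈ I.ret w, x r k)
        + ∑ k ∈ S, (∑ r ∈ I.ret w, I.dcR r k l) * yw w k := by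
  rw [← block_eq]
  exact Finset.sum_congr rfl fun r hr => by rw [retW I w r hr]

lemma toSTD_mem (I : LSData) (q : TLFPoint I) (hF : TLFFeasLP I q)
    (h1 : TLFSingle I q) (h2 : TLFTwo I q) (h3 : TLFThree I q) :
    STDFeasLP I (toSTD I q) ∧ STDSingle I (toSTD I q) ∧ STDTwo I (toSTD I q) ∧
      STDThree I (toSTD I q) ∧ STDObj I (toSTD I q) = TLFObj I q := by
  obtain ⟨hs0, hf0, hf1, hf2, hc0, hc1, hc2, hnn, hyP, hyW, hyR⟩ := hF
  refine ⟨?_, ?_, ?_, ?_, ?_⟩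
  · -- feasibility
    refine ⟨?_, ?_, ?_, ?_, ?_, ?_, ?_, ?_, ?_, ?_, ?_, ?_⟩
    · simp [toSTD, fun r => (hs0 r).1]
    · intro w; simp [toSTD, fun r => (hs0 r).2.1]
    · intro r; simp [toSTD, (hs0 r).2.2]
    · intro t ht
      show (∑ r, q.s0 r (t - 1)) + (∑ r, q.x0 r t)
        = (∑ w, ∑ r ∈ I.ret w, q.x1 r t) + ∑ r, q.s0 r t
      rw [fiber, ← Finset.sum_add_distrib, ← Finset.sum_add_distrib]
      exact Finset.sum_congr rfl fun r _ => hf0 r t ht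
    · intro w t ht
      show (∑ r ∈ I.ret w, q.s1 r (t - 1)) + (∑ r ∈ I.ret w, q.x1 r t)
        = (∑ r ∈ I.ret w, q.x2 r t) + ∑ r ∈ I.ret w, q.s1 r t
      rw [← Finset.sum_add_distrib, ← Finset.sum_add_distrib]
      exact Finset.sum_congr rfl fun r _ => hf1 r t ht
    · exact fun r t ht => hf2 r t ht
    · intro t ht
      show (∑ r, q.x0 r t) ≤ I.dcP t I.NT * q.yP t
      rw [LSData.dcP, Finset.sum_mul]
      exact Finset.sum_le_sum fun r _ => hc0 r t ht
    · intro w t ht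
      show (∑ r ∈ I.ret w, q.x1 r t) ≤ I.dcW w t I.NT * q.yW w t
      rw [LSData.dcW, Finset.sum_mul]
      refine Finset.sum_le_sum fun r hr => ?_
      rw [← retW I w r hr]
      exact hc1 r t ht
    · exact fun r t ht => hc2 r t ht
    · intro t ht
      exact ⟨Finset.sum_nonneg fun r _ => (hnn r t ht).1,
        Finset.sum_nonneg fun r _ => (hnn r t ht).2.2.2.1,
        (hyP t ht).1, (hyP t ht).2⟩
    · intro w t ht
      exact ⟨Finset.sum_nonneg fun r _ => (hnn r t ht).2.1,
        Finset.sum_nonneg fun r _ => (hnn r t ht).2.2.2.2.1,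
        (hyW w t ht).1, (hyW w t ht).2⟩
    · intro r t ht
      exact ⟨(hnn r t ht).2.2.1, (hnn r t ht).2.2.2.2.2, (hyR r t ht).1, (hyR r t ht).2⟩
  · -- single-level
    refine ⟨?_, ?_, ?_⟩
    · intro l hl S hSsub
      show (∑ k ∈ Icc 1 l \ S, ∑ r, q.x0 r k) + ∑ k ∈ S, I.dcP k l * q.yP k ≥ I.dcP 1 l
      have key : ∀ r : I.R, I.dcR r 1 l ≤
          ∑ k ∈ Icc 1 l \ S, q.x0 r k + ∑ k ∈ S, I.dcR r k l * q.yP k :=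
        fun r => (h1 r l hl S hSsub).1
      calc I.dcP 1 l = ∑ r, I.dcR r 1 l := rfl
        _ ≤ ∑ r, (∑ k ∈ Icc 1 l \ S, q.x0 r k + ∑ k ∈ S, I.dcR r k l * q.yP k) :=
            Finset.sum_le_sum fun r _ => key r
        _ = _ := block_eq I _ _ _ _ _ _
    · intro w l hl S hSsub
      show (∑ k ∈ Icc 1 l \ S, ∑ r ∈ I.ret w, q.x1 r k)
        + ∑ k ∈ S, I.dcW w k l * q.yW w k ≥ I.dcW w 1 l
      have key : ∀ r ∈ I.ret w, I.dcR r 1 l ≤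
          ∑ k ∈ Icc 1 l \ S, q.x1 r k + ∑ k ∈ S, I.dcR r k l * q.yW (I.wOf r) k :=
        fun r _ => (h1 r l hl S hSsub).2.1
      calc I.dcW w 1 l = ∑ r ∈ I.ret w, I.dcR r 1 l := rfl
        _ ≤ ∑ r ∈ I.ret w,
            (∑ k ∈ Icc 1 l \ S, q.x1 r k + ∑ k ∈ S, I.dcR r k l * q.yW (I.wOf r) k) :=
            Finset.sum_le_sum key
        _ = _ := block_eq' I _ _ _ _ _ _
    · exact fun r l hl S hSsub => (h1 r l hl S hSsub).2.2
  · -- two-level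
    refine ⟨?_, ?_, ?_⟩
    · intro l hl li hli1 hlil Sp hSp Sw hSw
      have key : ∀ r : I.R, I.dcR r 1 l ≤
          (∑ k ∈ Icc 1 li \ Sp, q.x0 r k + ∑ k ∈ Sp, I.dcR r k l * q.yP k)
          + (∑ k ∈ Icc (li + 1) l \ Sw (I.wOf r), q.x1 r k
              + ∑ k ∈ Sw (I.wOf r), I.dcR r k l * q.yW (I.wOf r) k) := by
        intro r
        have := (h2 r l hl li hli1 hlil Sp hSp (Sw (I.wOf r)) (hSw (I.wOf r))).1
        linarith
      show (∑ k ∈ Icc 1 li \ Sp, ∑ r, q.x0 r k) + ∑ k ∈ Sp, I.dcP k l * q.yP k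
        + ∑ w, ((∑ k ∈ Icc (li + 1) l \ Sw w, ∑ r ∈ I.ret w, q.x1 r k)
            + ∑ k ∈ Sw w, I.dcW w k l * q.yW w k) ≥ I.dcP 1 l
      have hws : ∑ w, ((∑ k ∈ Icc (li + 1) l \ Sw w, ∑ r ∈ I.ret w, q.x1 r k)
            + ∑ k ∈ Sw w, I.dcW w k l * q.yW w k)
          = ∑ r, (∑ k ∈ Icc (li + 1) l \ Sw (I.wOf r), q.x1 r k
              + ∑ k ∈ Sw (I.wOf r), I.dcR r k l * q.yW (I.wOf r) k) := by
        rw [← fiber I (fun r => ∑ k ∈ Icc (li + 1) l \ Sw (I.wOf r), q.x1 r k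
              + ∑ k ∈ Sw (I.wOf r), I.dcR r k l * q.yW (I.wOf r) k)]
        refine Finset.sum_congr rfl fun w _ => ?_
        rw [show (∑ r ∈ I.ret w, (∑ k ∈ Icc (li + 1) l \ Sw (I.wOf r), q.x1 r k
              + ∑ k ∈ Sw (I.wOf r), I.dcR r k l * q.yW (I.wOf r) k))
            = ∑ r ∈ I.ret w, (∑ k ∈ Icc (li + 1) l \ Sw w, q.x1 r k
              + ∑ k ∈ Sw w, I.dcR r k l * q.yW (I.wOf r) k) from
          Finset.sum_congr rfl fun r hr => by rw [retW I w r hr]]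
        rw [block_eq' I w]
        rfl
      rw [hws]
      calc I.dcP 1 l = ∑ r, I.dcR r 1 l := rfl
        _ ≤ ∑ r, ((∑ k ∈ Icc 1 li \ Sp, q.x0 r k + ∑ k ∈ Sp, I.dcR r k l * q.yP k)
            + (∑ k ∈ Icc (li + 1) l \ Sw (I.wOf r), q.x1 r k
              + ∑ k ∈ Sw (I.wOf r), I.dcR r k l * q.yW (I.wOf r) k)) :=
            Finset.sum_le_sum fun r _ => key r
        _ = _ := by
            rw [Finset.sum_add_distrib, block_eq I]; rfl
    · intro l hl li hli1 hlil Sp hSp Sr hSr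
      have key : ∀ r : I.R, I.dcR r 1 l ≤
          (∑ k ∈ Icc 1 li \ Sp, q.x0 r k + ∑ k ∈ Sp, I.dcR r k l * q.yP k)
          + (∑ k ∈ Icc (li + 1) l \ Sr r, q.x2 r k
              + ∑ k ∈ Sr r, I.dcR r k l * q.yR r k) := by
        intro r
        have := (h2 r l hl li hli1 hlil Sp hSp (Sr r) (hSr r)).2.1
        linarith
      show (∑ k ∈ Icc 1 li \ Sp, ∑ r, q.x0 r k) + ∑ k ∈ Sp, I.dcP k l * q.yP k
        + ∑ r, (∑ k ∈ Icc (li + 1) l \ Sr r, q.x2 r k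
            + ∑ k ∈ Sr r, I.dcR r k l * q.yR r k) ≥ I.dcP 1 l
      calc I.dcP 1 l = ∑ r, I.dcR r 1 l := rfl
        _ ≤ ∑ r, ((∑ k ∈ Icc 1 li \ Sp, q.x0 r k + ∑ k ∈ Sp, I.dcR r k l * q.yP k)
            + (∑ k ∈ Icc (li + 1) l \ Sr r, q.x2 r k
              + ∑ k ∈ Sr r, I.dcR r k l * q.yR r k)) :=
            Finset.sum_le_sum fun r _ => key r
        _ = _ := by rw [Finset.sum_add_distrib, block_eq I]; rfl
    · intro w l hl li hli1 hlil Sw hSw Sr hSr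
      have key : ∀ r ∈ I.ret w, I.dcR r 1 l ≤
          (∑ k ∈ Icc 1 li \ Sw, q.x1 r k + ∑ k ∈ Sw, I.dcR r k l * q.yW (I.wOf r) k)
          + (∑ k ∈ Icc (li + 1) l \ Sr r, q.x2 r k
              + ∑ k ∈ Sr r, I.dcR r k l * q.yR r k) := by
        intro r _
        have := (h2 r l hl li hli1 hlil Sw hSw (Sr r) (hSr r)).2.2
        linarith
      show (∑ k ∈ Icc 1 li \ Sw, ∑ r ∈ I.ret w, q.x1 r k)
        + ∑ k ∈ Sw, I.dcW w k l * q.yW w k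
        + ∑ r ∈ I.ret w, (∑ k ∈ Icc (li + 1) l \ Sr r, q.x2 r k
            + ∑ k ∈ Sr r, I.dcR r k l * q.yR r k) ≥ I.dcW w 1 l
      calc I.dcW w 1 l = ∑ r ∈ I.ret w, I.dcR r 1 l := rfl
        _ ≤ ∑ r ∈ I.ret w,
            ((∑ k ∈ Icc 1 li \ Sw, q.x1 r k + ∑ k ∈ Sw, I.dcR r k l * q.yW (I.wOf r) k)
            + (∑ k ∈ Icc (li + 1) l \ Sr r, q.x2 r k
              + ∑ k ∈ Sr r, I.dcR r k l * q.yR r k)) :=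
            Finset.sum_le_sum key
        _ = _ := by rw [Finset.sum_add_distrib, block_eq' I w]; rfl
  · -- three-level
    intro l hl lp lw hlp hlp2 hlplw hlw Sp hSp Sw hSw Sr hSr
    have hl3 : l ∈ Icc 3 I.NT := hl
    have key : ∀ r : I.R, I.dcR r 1 l ≤
        (∑ k ∈ Icc 1 lp \ Sp, q.x0 r k + ∑ k ∈ Sp, I.dcR r k l * q.yP k)
        + (∑ k ∈ Icc (lp + 1) lw \ Sw (I.wOf r), q.x1 r k
            + ∑ k ∈ Sw (I.wOf r), I.dcR r k l * q.yW (I.wOf r) k)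
        + (∑ k ∈ Icc (lw + 1) l \ Sr r, q.x2 r k
            + ∑ k ∈ Sr r, I.dcR r k l * q.yR r k) := by
      intro r
      have := h3 r l hl3 lp lw hlp hlp2 hlplw hlw Sp hSp (Sw (I.wOf r)) (hSw (I.wOf r))
        (Sr r) (hSr r)
      linarith
    show (∑ k ∈ Icc 1 lp \ Sp, ∑ r, q.x0 r k) + ∑ k ∈ Sp, I.dcP k l * q.yP k
      + ∑ w, ((∑ k ∈ Icc (lp + 1) lw \ Sw w, ∑ r ∈ I.ret w, q.x1 r k)
          + ∑ k ∈ Sw w, I.dcW w k l * q.yW w k)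
      + ∑ r, (∑ k ∈ Icc (lw + 1) l \ Sr r, q.x2 r k
          + ∑ k ∈ Sr r, I.dcR r k l * q.yR r k) ≥ I.dcP 1 l
    have hws : ∑ w, ((∑ k ∈ Icc (lp + 1) lw \ Sw w, ∑ r ∈ I.ret w, q.x1 r k)
          + ∑ k ∈ Sw w, I.dcW w k l * q.yW w k)
        = ∑ r, (∑ k ∈ Icc (lp + 1) lw \ Sw (I.wOf r), q.x1 r k
            + ∑ k ∈ Sw (I.wOf r), I.dcR r k l * q.yW (I.wOf r) k) := by
      rw [← fiber I (fun r => ∑ k ∈ Icc (lp + 1) lw \ Sw (I.wOf r), q.x1 r k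
            + ∑ k ∈ Sw (I.wOf r), I.dcR r k l * q.yW (I.wOf r) k)]
      refine Finset.sum_congr rfl fun w _ => ?_
      rw [show (∑ r ∈ I.ret w, (∑ k ∈ Icc (lp + 1) lw \ Sw (I.wOf r), q.x1 r k
            + ∑ k ∈ Sw (I.wOf r), I.dcR r k l * q.yW (I.wOf r) k))
          = ∑ r ∈ I.ret w, (∑ k ∈ Icc (lp + 1) lw \ Sw w, q.x1 r k
            + ∑ k ∈ Sw w, I.dcR r k l * q.yW (I.wOf r) k) from
        Finset.sum_congr rfl fun r hr => by rw [retW I w r hr]]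
      rw [block_eq' I w]
      rfl
    rw [hws]
    calc I.dcP 1 l = ∑ r, I.dcR r 1 l := rfl
      _ ≤ ∑ r, ((∑ k ∈ Icc 1 lp \ Sp, q.x0 r k + ∑ k ∈ Sp, I.dcR r k l * q.yP k)
          + (∑ k ∈ Icc (lp + 1) lw \ Sw (I.wOf r), q.x1 r k
            + ∑ k ∈ Sw (I.wOf r), I.dcR r k l * q.yW (I.wOf r) k)
          + (∑ k ∈ Icc (lw + 1) l \ Sr r, q.x2 r k
            + ∑ k ∈ Sr r, I.dcR r k l * q.yR r k)) :=
          Finset.sum_le_sum fun r _ => key r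
      _ = _ := by
          rw [Finset.sum_add_distrib, Finset.sum_add_distrib, block_eq I]; rfl
  · -- objective
    unfold STDObj TLFObj toSTD
    refine Finset.sum_congr rfl fun t _ => ?_
    have e1 : I.hcP t * (∑ r, q.s0 r t) = ∑ r, I.hcP t * q.s0 r t :=
      Finset.mul_sum _ _ _
    have e2 : (∑ w, I.hcW w t * ∑ r ∈ I.ret w, q.s1 r t)
        = ∑ r, I.hcW (I.wOf r) t * q.s1 r t := by
      rw [← fiber I (fun r => I.hcW (I.wOf r) t * q.s1 r t)]
      refine Finset.sum_congr rfl fun w _ => ?_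
      rw [Finset.mul_sum]
      exact Finset.sum_congr rfl fun r hr => by rw [retW I w r hr]
    simp only [e1, e2]

/-- `z_{STD+} ≤ z_{3LF+}`: the optimal value of the LP relaxation of the standard
formulation strengthened with the single-, two- and three-level valid inequalities
is at most that of the extended formulation strengthened with its corresponding
inequalities. -/
theorem zSTDplus_le_z3LFplus (I : LSData)
    (hT : {v : ℝ | ∃ q : TLFPoint I,
        TLFFeasLP I q ∧ TLFSingle I q ∧ TLFTwo I q ∧ TLFThree I q ∧ v = TLFObj I q}.Nonempty)
    (hS : BddBelow {v : ℝ | ∃ p : STDPoint I,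
        STDFeasLP I p ∧ STDSingle I p ∧ STDTwo I p ∧ STDThree I p ∧ v = STDObj I p}) :
    sInf {v : ℝ | ∃ p : STDPoint I,
        STDFeasLP I p ∧ STDSingle I p ∧ STDTwo I p ∧ STDThree I p ∧ v = STDObj I p}
      ≤ sInf {v : ℝ | ∃ q : TLFPoint I,
        TLFFeasLP I q ∧ TLFSingle I q ∧ TLFTwo I q ∧ TLFThree I q ∧ v = TLFObj I q} := by
  refine csInf_le_csInf hS hT ?_
  rintro v ⟨q, hF, h1, h2, h3, rfl⟩
  obtain ⟨a, b, c, d, e⟩ := toSTD_mem I q hF h1 h2 h3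
  exact ⟨toSTD I q, a, b, c, d, e.symm⟩
end

section
/- In the single-retailer chain with plant, one warehouse, and one retailer, for any feasible solution of the per-retailer extended formulation, any l ≥ 2, levels b < b', any l_b < l, and sets S^b ⊆ {1,...,l_b}, S^{b'} ⊆ {l_b+1,...,l}, the two-level inequality Σ_{k ∈ {1,...,l_b}\S^b} x^{b}_k + Σ_{k ∈ S^b} d_{k,l} y^{(b)}_k + Σ_{k ∈ {l_b+1,...,l}\S^{b'}} x^{b'}_k + Σ_{k ∈ S^{b'}} d_{k,l} y^{(b')}_k ≥ d_{1,l} holds, where d_{k,l} = Σ_{j=k}^l d_j is the cumulative retailer demand and y^{(b)} denotes the setup variable of the facility at level b on the chain. -/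
open Finset

lemma tele_sum (NT : ℕ) (f g st : ℕ → ℝ) (h0 : st 0 = 0)
    (h : ∀ t ∈ Icc 1 NT, st (t - 1) + f t = g t + st t) :
    ∀ t, t ≤ NT → ∑ k ∈ Icc 1 t, f k = (∑ k ∈ Icc 1 t, g k) + st t := by
  intro t
  induction t with
  | zero => intro _; simp [h0]
  | succ n ih =>
    intro hn
    have hn' : n ≤ NT := Nat.le_of_succ_le hn
    have h1 := h (n + 1) (by simp; omega)
    simp only [Nat.add_sub_cancel] at h1
    rw [Finset.sum_Icc_succ_top (by omega : 1 ≤ n + 1),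
        Finset.sum_Icc_succ_top (by omega : 1 ≤ n + 1), ih hn']
    linarith

/-- Two-level valid inequality for the single-retailer three-level serial chain. -/
theorem chain_two_level_inequality
    (NT : ℕ) (d : ℕ → ℝ) (x s y : Fin 3 → ℕ → ℝ)
    (hd : ∀ t ∈ Icc 1 NT, 0 ≤ d t)
    (hs0 : ∀ b, s b 0 = 0)
    (hbal0 : ∀ t ∈ Icc 1 NT, s 0 (t - 1) + x 0 t = x 1 t + s 0 t)
    (hbal1 : ∀ t ∈ Icc 1 NT, s 1 (t - 1) + x 1 t = x 2 t + s 1 t)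
    (hbal2 : ∀ t ∈ Icc 1 NT, s 2 (t - 1) + x 2 t = d t + s 2 t)
    (hset : ∀ b, ∀ t ∈ Icc 1 NT, x b t ≤ (∑ j ∈ Icc t NT, d j) * y b t)
    (hy : ∀ b, ∀ t ∈ Icc 1 NT, y b t = 0 ∨ y b t = 1)
    (hnn : ∀ b, ∀ t ∈ Icc 1 NT, 0 ≤ x b t ∧ 0 ≤ s b t)
    (b b' : Fin 3) (hbb : b < b')
    (l : ℕ) (hl2 : 2 ≤ l) (hlNT : l ≤ NT)
    (lb : ℕ) (hlb : lb < l)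
    (Sb Sb' : Finset ℕ) (hSb : Sb ⊆ Icc 1 lb) (hSb' : Sb' ⊆ Icc (lb + 1) l) :
    ∑ k ∈ Icc 1 lb \ Sb, x b k + ∑ k ∈ Sb, (∑ j ∈ Icc k l, d j) * y b k
      + ∑ k ∈ Icc (lb + 1) l \ Sb', x b' k
      + ∑ k ∈ Sb', (∑ j ∈ Icc k l, d j) * y b' k
      ≥ ∑ j ∈ Icc 1 l, d j := by
  -- basic nonnegativity facts
  have hxnn : ∀ c : Fin 3, ∀ k ∈ Icc 1 NT, 0 ≤ x c k := fun c k hk => (hnn c k hk).1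
  have hsnn : ∀ c : Fin 3, ∀ t, t ≤ NT → 0 ≤ s c t := by
    intro c t ht
    rcases Nat.eq_zero_or_pos t with h | h
    · simp [h, hs0]
    · exact (hnn c t (by simp; omega)).2
  have hynn : ∀ c : Fin 3, ∀ k ∈ Icc 1 NT, 0 ≤ y c k := by
    intro c k hk; rcases hy c k hk with h | h <;> simp [h]
  have hdsum : ∀ k, 1 ≤ k → 0 ≤ ∑ j ∈ Icc k l, d j := by
    intro k hk
    refine Finset.sum_nonneg fun j hj => hd j ?_
    simp only [Finset.mem_Icc] at hj ⊢; omega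
  have hxzero : ∀ c : Fin 3, ∀ k ∈ Icc 1 NT, y c k = 0 → x c k = 0 := by
    intro c k hk hy0
    have h1 := hset c k hk
    rw [hy0, mul_zero] at h1
    exact le_antisymm h1 (hxnn c k hk)
  -- cumulative sums
  have H0 := tele_sum NT (x 0) (x 1) (s 0) (hs0 0) hbal0
  have H1 := tele_sum NT (x 1) (x 2) (s 1) (hs0 1) hbal1
  have H2 := tele_sum NT (x 2) d (s 2) (hs0 2) hbal2
  have cum2 : ∀ t, t ≤ NT → ∑ j ∈ Icc 1 t, d j ≤ ∑ k ∈ Icc 1 t, x 2 k := by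
    intro t ht; rw [H2 t ht]; linarith [hsnn 2 t ht]
  have cum1 : ∀ t, t ≤ NT → ∑ j ∈ Icc 1 t, d j ≤ ∑ k ∈ Icc 1 t, x 1 k := by
    intro t ht; rw [H1 t ht]; linarith [hsnn 1 t ht, cum2 t ht]
  have cum0 : ∀ t, t ≤ NT → ∑ j ∈ Icc 1 t, d j ≤ ∑ k ∈ Icc 1 t, x 0 k := by
    intro t ht; rw [H0 t ht]; linarith [hsnn 0 t ht, cum1 t ht]
  have cum : ∀ c : Fin 3, ∀ t, t ≤ NT → ∑ j ∈ Icc 1 t, d j ≤ ∑ k ∈ Icc 1 t, x c k := by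
    intro c; fin_cases c
    · exact cum0
    · exact cum1
    · exact cum2
  have mono : ∀ t, t ≤ NT → ∑ k ∈ Icc 1 t, x b' k ≤ ∑ k ∈ Icc 1 t, x b k := by
    intro t ht
    have e0 := H0 t ht; have e1 := H1 t ht; have e2 := H2 t ht
    have n0 := hsnn 0 t ht; have n1 := hsnn 1 t ht
    fin_cases b <;> fin_cases b' <;>
      first
      | exact absurd hbb (by decide)
      | (show (∑ k ∈ Icc 1 t, x 1 k) ≤ ∑ k ∈ Icc 1 t, x 0 k; linarith)
      | (show (∑ k ∈ Icc 1 t, x 2 k) ≤ ∑ k ∈ Icc 1 t, x 0 k; linarith)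
      | (show (∑ k ∈ Icc 1 t, x 2 k) ≤ ∑ k ∈ Icc 1 t, x 1 k; linarith)
  -- splitting of sums over Icc
  have hsplit : ∀ (f : ℕ → ℝ) (m t : ℕ), m ≤ t →
      (∑ k ∈ Icc 1 m, f k) + ∑ k ∈ Icc (m + 1) t, f k = ∑ k ∈ Icc 1 t, f k := by
    intro f m t hmt
    have e1 : Icc 1 m = Ioc 0 m := Finset.Icc_add_one_left_eq_Ioc 0 m
    have e2 : Icc (m + 1) t = Ioc m t := Finset.Icc_add_one_left_eq_Ioc m t
    have e3 : Icc 1 t = Ioc 0 t := Finset.Icc_add_one_left_eq_Ioc 0 t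
    rw [e1, e2, e3]
    exact Finset.sum_Ioc_consecutive f (Nat.zero_le m) hmt
  -- nonnegativity of the four summands
  have hBnn : 0 ≤ ∑ k ∈ Sb, (∑ j ∈ Icc k l, d j) * y b k := by
    refine Finset.sum_nonneg fun k hk => ?_
    have hk' := Finset.mem_Icc.mp (hSb hk)
    exact mul_nonneg (hdsum k hk'.1) (hynn b k (by simp; omega))
  have hEnn : 0 ≤ ∑ k ∈ Sb', (∑ j ∈ Icc k l, d j) * y b' k := by
    refine Finset.sum_nonneg fun k hk => ?_
    have hk' := Finset.mem_Icc.mp (hSb' hk)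
    exact mul_nonneg (hdsum k (by omega)) (hynn b' k (by simp; omega))
  have hAnn : 0 ≤ ∑ k ∈ Icc 1 lb \ Sb, x b k := by
    refine Finset.sum_nonneg fun k hk => ?_
    have hk' := Finset.mem_Icc.mp (Finset.mem_sdiff.mp hk).1
    exact hxnn b k (by simp; omega)
  have hCnn : 0 ≤ ∑ k ∈ Icc (lb + 1) l \ Sb', x b' k := by
    refine Finset.sum_nonneg fun k hk => ?_
    have hk' := Finset.mem_Icc.mp (Finset.mem_sdiff.mp hk).1
    exact hxnn b' k (by simp; omega)
  -- case analysis on whether some setup in Sb is open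
  by_cases hcase : (Sb.filter fun k => y b k = 1).Nonempty
  · -- Case I: minimal open setup t = m+1 in Sb
    set T := Sb.filter fun k => y b k = 1 with hT
    obtain ⟨t, htT, hmin⟩ := Finset.exists_min_image T id hcase
    have htSb : t ∈ Sb := (Finset.mem_filter.mp htT).1
    have hty : y b t = 1 := (Finset.mem_filter.mp htT).2
    have htlb := Finset.mem_Icc.mp (hSb htSb)
    obtain ⟨m, rfl⟩ : ∃ m, t = m + 1 := ⟨t - 1, by omega⟩
    -- A ≥ sum over Icc 1 m of x b
    have hA : ∑ k ∈ Icc 1 m, x b k ≤ ∑ k ∈ Icc 1 lb \ Sb, x b k := by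
      have heq : ∑ k ∈ Icc 1 m \ Sb, x b k = ∑ k ∈ Icc 1 m, x b k := by
        refine Finset.sum_subset Finset.sdiff_subset fun k hk hk' => ?_
        have hkS : k ∈ Sb := by
          by_contra hc; exact hk' (Finset.mem_sdiff.mpr ⟨hk, hc⟩)
        have hkm := Finset.mem_Icc.mp hk
        have hkne : y b k ≠ 1 := by
          intro h1
          have := hmin k (Finset.mem_filter.mpr ⟨hkS, h1⟩)
          simp only [id] at this; omega
        have hky : y b k = 0 := by
          rcases hy b k (by simp; omega) with h | h
          · exact h
          · exact absurd h hkne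
        exact hxzero b k (by simp; omega) hky
      rw [← heq]
      refine Finset.sum_le_sum_of_subset_of_nonneg ?_ fun k hk _ => ?_
      · refine Finset.sdiff_subset_sdiff ?_ le_rfl
        exact Finset.Icc_subset_Icc le_rfl (by omega)
      · have hk' := Finset.mem_Icc.mp (Finset.mem_sdiff.mp hk).1
        exact hxnn b k (by simp; omega)
    have hB : (∑ j ∈ Icc (m + 1) l, d j) ≤ ∑ k ∈ Sb, (∑ j ∈ Icc k l, d j) * y b k := by
      have := Finset.single_le_sum (f := fun k => (∑ j ∈ Icc k l, d j) * y b k)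
        (fun k hk => by
          have hk' := Finset.mem_Icc.mp (hSb hk)
          exact mul_nonneg (hdsum k hk'.1) (hynn b k (by simp; omega))) htSb
      simp only [hty, mul_one] at this
      exact this
    have hcumm : ∑ j ∈ Icc 1 m, d j ≤ ∑ k ∈ Icc 1 m, x b k := cum b m (by omega)
    have hD := hsplit d m l (by omega)
    linarith
  · -- Case II: all setups in Sb closed, so x b vanishes on Sb
    have hSbz : ∀ k ∈ Sb, x b k = 0 := by
      intro k hk
      have hk' := Finset.mem_Icc.mp (hSb hk)
      have hky : y b k = 0 := by
        rcases hy b k (by simp; omega) with h | h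
        · exact h
        · exact absurd (Finset.mem_filter.mpr ⟨hk, h⟩) (by
            intro hc; exact hcase ⟨k, hc⟩)
      exact hxzero b k (by simp; omega) hky
    have hAeq : ∑ k ∈ Icc 1 lb \ Sb, x b k = ∑ k ∈ Icc 1 lb, x b k := by
      refine Finset.sum_subset Finset.sdiff_subset fun k hk hk' => ?_
      have hkS : k ∈ Sb := by
        by_contra hc; exact hk' (Finset.mem_sdiff.mpr ⟨hk, hc⟩)
      exact hSbz k hkS
    have hAge : ∑ k ∈ Icc 1 lb, x b' k ≤ ∑ k ∈ Icc 1 lb \ Sb, x b k := by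
      rw [hAeq]; exact mono lb (by omega)
    by_cases hcase' : (Sb'.filter fun k => y b' k = 1).Nonempty
    · -- Sub II.2: minimal open setup t' = m'+1 in Sb'
      obtain ⟨t', htT', hmin'⟩ := Finset.exists_min_image (Sb'.filter fun k => y b' k = 1) id hcase'
      have htSb' : t' ∈ Sb' := (Finset.mem_filter.mp htT').1
      have hty' : y b' t' = 1 := (Finset.mem_filter.mp htT').2
      have htl' := Finset.mem_Icc.mp (hSb' htSb')
      obtain ⟨m', rfl⟩ : ∃ m', t' = m' + 1 := ⟨t' - 1, by omega⟩
      have hC : ∑ k ∈ Icc (lb + 1) m', x b' k ≤ ∑ k ∈ Icc (lb + 1) l \ Sb', x b' k := by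
        have heq : ∑ k ∈ Icc (lb + 1) m' \ Sb', x b' k = ∑ k ∈ Icc (lb + 1) m', x b' k := by
          refine Finset.sum_subset Finset.sdiff_subset fun k hk hk' => ?_
          have hkS : k ∈ Sb' := by
            by_contra hc; exact hk' (Finset.mem_sdiff.mpr ⟨hk, hc⟩)
          have hkm := Finset.mem_Icc.mp hk
          have hkne : y b' k ≠ 1 := by
            intro h1
            have := hmin' k (Finset.mem_filter.mpr ⟨hkS, h1⟩)
            simp only [id] at this; omega
          have hky : y b' k = 0 := by
            rcases hy b' k (by simp; omega) with h | h
            · exact h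
            · exact absurd h hkne
          exact hxzero b' k (by simp; omega) hky
        rw [← heq]
        refine Finset.sum_le_sum_of_subset_of_nonneg ?_ fun k hk _ => ?_
        · refine Finset.sdiff_subset_sdiff ?_ le_rfl
          exact Finset.Icc_subset_Icc le_rfl (by omega)
        · have hk' := Finset.mem_Icc.mp (Finset.mem_sdiff.mp hk).1
          exact hxnn b' k (by simp; omega)
      have hE : (∑ j ∈ Icc (m' + 1) l, d j) ≤ ∑ k ∈ Sb', (∑ j ∈ Icc k l, d j) * y b' k := by
        have := Finset.single_le_sum (f := fun k => (∑ j ∈ Icc k l, d j) * y b' k)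
          (fun k hk => by
            have hk' := Finset.mem_Icc.mp (hSb' hk)
            exact mul_nonneg (hdsum k (by omega)) (hynn b' k (by simp; omega))) htSb'
        simp only [hty', mul_one] at this
        exact this
      have hsx := hsplit (x b') lb m' (by omega)
      have hcumm : ∑ j ∈ Icc 1 m', d j ≤ ∑ k ∈ Icc 1 m', x b' k := cum b' m' (by omega)
      have hD := hsplit d m' l (by omega)
      linarith
    · -- Sub II.1: all setups in Sb' closed
      have hCeq : ∑ k ∈ Icc (lb + 1) l \ Sb', x b' k = ∑ k ∈ Icc (lb + 1) l, x b' k := by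
        refine Finset.sum_subset Finset.sdiff_subset fun k hk hk' => ?_
        have hkS : k ∈ Sb' := by
          by_contra hc; exact hk' (Finset.mem_sdiff.mpr ⟨hk, hc⟩)
        have hk' := Finset.mem_Icc.mp (hSb' hkS)
        have hky : y b' k = 0 := by
          rcases hy b' k (by simp; omega) with h | h
          · exact h
          · exact absurd (Finset.mem_filter.mpr ⟨hkS, h⟩) (by
              intro hc; exact hcase' ⟨k, hc⟩)
        exact hxzero b' k (by simp; omega) hky
      have hsx := hsplit (x b') lb l (by omega)
      have hcl : ∑ j ∈ Icc 1 l, d j ≤ ∑ k ∈ Icc 1 l, x b' k := cum b' l hlNT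
      linarith
end

section
/- In the single-retailer three-level serial chain, for any feasible integer solution, any l ≥ 3, boundaries l_0 < l_1 < l with l_0 ≤ l−2 and l_1 ≤ l−1, and sets S^0 ⊆ {1,...,l_0}, S^1 ⊆ {l_0+1,...,l_1}, S^2 ⊆ {l_1+1,...,l}, the three-level inequality Σ_{k ∈ {1,...,l_0}\S^0} x^0_k + Σ_{k ∈ S^0} d_{k,l} y^0_k + Σ_{k ∈ {l_0+1,...,l_1}\S^1} x^1_k + Σ_{k ∈ S^1} d_{k,l} y^1_k + Σ_{k ∈ {l_1+1,...,l}\S^2} x^2_k + Σ_{k ∈ S^2} d_{k,l} y^2_k ≥ d_{1,l} holds. -/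
open Finset

lemma chain_telescope (NT : ℕ) (f g h : ℕ → ℝ) (hg0 : g 0 = 0)
    (hbal : ∀ t ∈ Icc 1 NT, g (t - 1) + f t = h t + g t) :
    ∀ m, m ≤ NT → ∑ k ∈ Icc 1 m, f k = ∑ k ∈ Icc 1 m, h k + g m := by
  intro m
  induction m with
  | zero => intro _; simp [hg0]
  | succ n ih =>
    intro hle
    have hn := ih (Nat.le_of_succ_le hle)
    have hb := hbal (n + 1) (mem_Icc.mpr ⟨by omega, hle⟩)
    simp only [Nat.add_sub_cancel] at hb
    rw [Finset.sum_Icc_succ_top (by omega : 1 ≤ n + 1),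
        Finset.sum_Icc_succ_top (by omega : 1 ≤ n + 1), hn]
    linarith

lemma icc_one_eq_ioc (n : ℕ) : Icc 1 n = Ioc 0 n := by
  rw [← Finset.Icc_add_one_left_eq_Ioc]
  rfl

lemma icc_split (a b : ℕ) (h : a ≤ b) (f : ℕ → ℝ) :
    ∑ k ∈ Icc 1 a, f k + ∑ k ∈ Icc (a + 1) b, f k = ∑ k ∈ Icc 1 b, f k := by
  rw [icc_one_eq_ioc, icc_one_eq_ioc, Finset.Icc_add_one_left_eq_Ioc]
  exact Finset.sum_Ioc_consecutive _ (Nat.zero_le a) h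

lemma sum_diff_ge (a b c : ℕ) (S : Finset ℕ) (f : ℕ → ℝ) (hc : c ≤ b)
    (hnn : ∀ k ∈ Icc a b, 0 ≤ f k) (hz : ∀ k ∈ S, k ≤ c → f k = 0) :
    ∑ k ∈ Icc a c, f k ≤ ∑ k ∈ Icc a b \ S, f k := by
  have h1 : ∑ k ∈ Icc a c \ S, f k = ∑ k ∈ Icc a c, f k := by
    apply Finset.sum_subset Finset.sdiff_subset
    intro k hk hnk
    have hkS : k ∈ S := by
      by_contra hc'
      exact hnk (Finset.mem_sdiff.mpr ⟨hk, hc'⟩)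
    exact hz k hkS (mem_Icc.mp hk).2
  rw [← h1]
  apply Finset.sum_le_sum_of_subset_of_nonneg
  · exact Finset.sdiff_subset_sdiff (Icc_subset_Icc_right hc) le_rfl
  · intro k hk _
    exact hnn k (Finset.mem_sdiff.mp hk).1

lemma chain_flow (NT : ℕ) (d : ℕ → ℝ) (x s : Fin 3 → ℕ → ℝ)
    (hs0 : ∀ b, s b 0 = 0)
    (hbal0 : ∀ t ∈ Icc 1 NT, s 0 (t - 1) + x 0 t = x 1 t + s 0 t)
    (hbal1 : ∀ t ∈ Icc 1 NT, s 1 (t - 1) + x 1 t = x 2 t + s 1 t)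
    (hbal2 : ∀ t ∈ Icc 1 NT, s 2 (t - 1) + x 2 t = d t + s 2 t)
    (hsnn : ∀ b, ∀ t, t ≤ NT → 0 ≤ s b t)
    (m0 m1 m : ℕ) (h0 : m0 ≤ m1) (h1 : m1 ≤ m) (hm : m ≤ NT) :
    ∑ j ∈ Icc 1 m, d j ≤
      ∑ k ∈ Icc 1 m0, x 0 k + ∑ k ∈ Icc (m0 + 1) m1, x 1 k
        + ∑ k ∈ Icc (m1 + 1) m, x 2 k := by
  have c0 := chain_telescope NT (x 0) (s 0) (x 1) (hs0 0) hbal0 m0 (by omega)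
  have c1 := chain_telescope NT (x 1) (s 1) (x 2) (hs0 1) hbal1 m1 (by omega)
  have c2 := chain_telescope NT (x 2) (s 2) d (hs0 2) hbal2 m hm
  have sp1 := icc_split m0 m1 h0 (x 1)
  have sp2 := icc_split m1 m h1 (x 2)
  have n0 := hsnn 0 m0 (by omega)
  have n1 := hsnn 1 m1 (by omega)
  have n2 := hsnn 2 m hm
  linarith

/-- Three-level valid inequality for the single-retailer three-level serial chain. -/
theorem chain_three_level_inequality
    (NT : ℕ) (d : ℕ → ℝ) (x s y : Fin 3 → ℕ → ℝ)
    (hd : ∀ t ∈ Icc 1 NT, 0 ≤ d t)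
    (hs0 : ∀ b, s b 0 = 0)
    (hbal0 : ∀ t ∈ Icc 1 NT, s 0 (t - 1) + x 0 t = x 1 t + s 0 t)
    (hbal1 : ∀ t ∈ Icc 1 NT, s 1 (t - 1) + x 1 t = x 2 t + s 1 t)
    (hbal2 : ∀ t ∈ Icc 1 NT, s 2 (t - 1) + x 2 t = d t + s 2 t)
    (hset : ∀ b, ∀ t ∈ Icc 1 NT, x b t ≤ (∑ j ∈ Icc t NT, d j) * y b t)
    (hy : ∀ b, ∀ t ∈ Icc 1 NT, y b t = 0 ∨ y b t = 1)
    (hnn : ∀ b, ∀ t ∈ Icc 1 NT, 0 ≤ x b t ∧ 0 ≤ s b t)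
    (l : ℕ) (hl3 : 3 ≤ l) (hlNT : l ≤ NT)
    (l0 l1 : ℕ) (h01 : l0 < l1) (h1l : l1 < l) (h0l2 : l0 + 2 ≤ l) (h1l1 : l1 + 1 ≤ l)
    (S0 S1 S2 : Finset ℕ)
    (hS0 : S0 ⊆ Icc 1 l0) (hS1 : S1 ⊆ Icc (l0 + 1) l1) (hS2 : S2 ⊆ Icc (l1 + 1) l) :
    ∑ k ∈ Icc 1 l0 \ S0, x 0 k + ∑ k ∈ S0, (∑ j ∈ Icc k l, d j) * y 0 k
      + ∑ k ∈ Icc (l0 + 1) l1 \ S1, x 1 k + ∑ k ∈ S1, (∑ j ∈ Icc k l, d j) * y 1 k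
      + ∑ k ∈ Icc (l1 + 1) l \ S2, x 2 k + ∑ k ∈ S2, (∑ j ∈ Icc k l, d j) * y 2 k
      ≥ ∑ j ∈ Icc 1 l, d j := by
  classical
  -- basic membership facts
  have hmem0 : ∀ k ∈ Icc 1 l0, k ∈ Icc 1 NT := by
    intro k hk; simp only [mem_Icc] at *; omega
  have hmem1 : ∀ k ∈ Icc (l0 + 1) l1, k ∈ Icc 1 NT := by
    intro k hk; simp only [mem_Icc] at *; omega
  have hmem2 : ∀ k ∈ Icc (l1 + 1) l, k ∈ Icc 1 NT := by
    intro k hk; simp only [mem_Icc] at *; omega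
  have hsnn : ∀ b, ∀ t, t ≤ NT → 0 ≤ s b t := by
    intro b t ht
    rcases Nat.eq_zero_or_pos t with h | h
    · rw [h, hs0]
    · exact (hnn b t (mem_Icc.mpr ⟨h, ht⟩)).2
  have hxnn : ∀ b, ∀ k ∈ Icc 1 NT, 0 ≤ x b k := fun b k hk => (hnn b k hk).1
  have hynn : ∀ b, ∀ k ∈ Icc 1 NT, 0 ≤ y b k := by
    intro b k hk
    rcases hy b k hk with h | h <;> rw [h] <;> norm_num
  have hdlnn : ∀ k, 1 ≤ k → 0 ≤ ∑ j ∈ Icc k l, d j := by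
    intro k hk
    apply Finset.sum_nonneg
    intro j hj
    simp only [mem_Icc] at hj
    exact hd j (mem_Icc.mpr ⟨by omega, by omega⟩)
  have htermnn : ∀ b, ∀ k ∈ Icc 1 NT, 0 ≤ (∑ j ∈ Icc k l, d j) * y b k := by
    intro b k hk
    exact mul_nonneg (hdlnn k (mem_Icc.mp hk).1) (hynn b k hk)
  have hxz : ∀ b, ∀ k ∈ Icc 1 NT, y b k = 0 → x b k = 0 := by
    intro b k hk hy0
    have h1 := hset b k hk
    rw [hy0, mul_zero] at h1
    exact le_antisymm h1 (hxnn b k hk)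
  -- nonnegativity of each of the six sums
  have hd0nn : 0 ≤ ∑ k ∈ Icc 1 l0 \ S0, x 0 k :=
    Finset.sum_nonneg fun k hk => hxnn 0 k (hmem0 k (Finset.mem_sdiff.mp hk).1)
  have hd1nn : 0 ≤ ∑ k ∈ Icc (l0 + 1) l1 \ S1, x 1 k :=
    Finset.sum_nonneg fun k hk => hxnn 1 k (hmem1 k (Finset.mem_sdiff.mp hk).1)
  have hd2nn : 0 ≤ ∑ k ∈ Icc (l1 + 1) l \ S2, x 2 k :=
    Finset.sum_nonneg fun k hk => hxnn 2 k (hmem2 k (Finset.mem_sdiff.mp hk).1)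
  have hy0nn : 0 ≤ ∑ k ∈ S0, (∑ j ∈ Icc k l, d j) * y 0 k :=
    Finset.sum_nonneg fun k hk => htermnn 0 k (hmem0 k (hS0 hk))
  have hy1nn : 0 ≤ ∑ k ∈ S1, (∑ j ∈ Icc k l, d j) * y 1 k :=
    Finset.sum_nonneg fun k hk => htermnn 1 k (hmem1 k (hS1 hk))
  have hy2nn : 0 ≤ ∑ k ∈ S2, (∑ j ∈ Icc k l, d j) * y 2 k :=
    Finset.sum_nonneg fun k hk => htermnn 2 k (hmem2 k (hS2 hk))
  set T0 := S0.filter (fun k => y 0 k = 1) with hT0def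
  set T1 := S1.filter (fun k => y 1 k = 1) with hT1def
  set T2 := S2.filter (fun k => y 2 k = 1) with hT2def
  by_cases hT0 : T0.Nonempty
  · -- minimal setup at level 0
    set t := T0.min' hT0 with htdef
    have htT : t ∈ T0 := Finset.min'_mem _ _
    obtain ⟨htS, hty⟩ := Finset.mem_filter.mp htT
    have htr : t ∈ Icc 1 l0 := hS0 htS
    have htr' := mem_Icc.mp htr
    have hA1 : ∑ k ∈ Icc 1 (t - 1), x 0 k ≤ ∑ k ∈ Icc 1 l0 \ S0, x 0 k := by
      apply sum_diff_ge 1 l0 (t - 1) S0 (x 0) (by omega)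
        (fun k hk => hxnn 0 k (hmem0 k hk))
      intro k hk hkle
      have hk' : k ∈ Icc 1 NT := hmem0 k (hS0 hk)
      rcases hy 0 k hk' with h | h
      · exact hxz 0 k hk' h
      · exfalso
        have : t ≤ k := Finset.min'_le _ _ (Finset.mem_filter.mpr ⟨hk, h⟩)
        have hk1 : 1 ≤ k := (mem_Icc.mp hk').1
        omega
    have hA2 : ∑ j ∈ Icc t l, d j ≤ ∑ k ∈ S0, (∑ j ∈ Icc k l, d j) * y 0 k := by
      have := Finset.single_le_sum
        (fun k hk => htermnn 0 k (hmem0 k (hS0 hk))) htS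
      rwa [hty, mul_one] at this
    have hA3 : ∑ j ∈ Icc 1 (t - 1), d j ≤ ∑ k ∈ Icc 1 (t - 1), x 0 k := by
      have hf := chain_flow NT d x s hs0 hbal0 hbal1 hbal2 hsnn
        (t - 1) (t - 1) (t - 1) le_rfl le_rfl (by omega)
      have he : Icc (t - 1 + 1) (t - 1) = (∅ : Finset ℕ) :=
        Finset.Icc_eq_empty (by omega)
      rw [he] at hf
      simpa using hf
    have hA4 : ∑ j ∈ Icc 1 (t - 1), d j + ∑ j ∈ Icc t l, d j = ∑ j ∈ Icc 1 l, d j := by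
      have := icc_split (t - 1) l (by omega) d
      have ht1 : t - 1 + 1 = t := by omega
      rwa [ht1] at this
    linarith
  · have hz0 : ∀ k ∈ S0, k ≤ l0 → x 0 k = 0 := by
      intro k hk _
      have hk' : k ∈ Icc 1 NT := hmem0 k (hS0 hk)
      rcases hy 0 k hk' with h | h
      · exact hxz 0 k hk' h
      · exact absurd ⟨k, Finset.mem_filter.mpr ⟨hk, h⟩⟩ hT0
    have hB0 : ∑ k ∈ Icc 1 l0, x 0 k ≤ ∑ k ∈ Icc 1 l0 \ S0, x 0 k :=
      sum_diff_ge 1 l0 l0 S0 (x 0) le_rfl (fun k hk => hxnn 0 k (hmem0 k hk)) hz0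
    by_cases hT1 : T1.Nonempty
    · set t := T1.min' hT1 with htdef
      have htT : t ∈ T1 := Finset.min'_mem _ _
      obtain ⟨htS, hty⟩ := Finset.mem_filter.mp htT
      have htr' := mem_Icc.mp (hS1 htS)
      have hB1 : ∑ k ∈ Icc (l0 + 1) (t - 1), x 1 k
          ≤ ∑ k ∈ Icc (l0 + 1) l1 \ S1, x 1 k := by
        apply sum_diff_ge (l0 + 1) l1 (t - 1) S1 (x 1) (by omega)
          (fun k hk => hxnn 1 k (hmem1 k hk))
        intro k hk hkle
        have hk' : k ∈ Icc 1 NT := hmem1 k (hS1 hk)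
        rcases hy 1 k hk' with h | h
        · exact hxz 1 k hk' h
        · exfalso
          have : t ≤ k := Finset.min'_le _ _ (Finset.mem_filter.mpr ⟨hk, h⟩)
          have hk1 : 1 ≤ k := (mem_Icc.mp hk').1
          omega
      have hB2 : ∑ j ∈ Icc t l, d j ≤ ∑ k ∈ S1, (∑ j ∈ Icc k l, d j) * y 1 k := by
        have := Finset.single_le_sum
          (fun k hk => htermnn 1 k (hmem1 k (hS1 hk))) htS
        rwa [hty, mul_one] at this
      have hB3 : ∑ j ∈ Icc 1 (t - 1), d j
          ≤ ∑ k ∈ Icc 1 l0, x 0 k + ∑ k ∈ Icc (l0 + 1) (t - 1), x 1 k := by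
        have hf := chain_flow NT d x s hs0 hbal0 hbal1 hbal2 hsnn
          l0 (t - 1) (t - 1) (by omega) le_rfl (by omega)
        have he : Icc (t - 1 + 1) (t - 1) = (∅ : Finset ℕ) :=
          Finset.Icc_eq_empty (by omega)
        rw [he] at hf
        simpa using hf
      have hB4 : ∑ j ∈ Icc 1 (t - 1), d j + ∑ j ∈ Icc t l, d j
          = ∑ j ∈ Icc 1 l, d j := by
        have := icc_split (t - 1) l (by omega) d
        have ht1 : t - 1 + 1 = t := by omega
        rwa [ht1] at this
      linarith
    · have hz1 : ∀ k ∈ S1, k ≤ l1 → x 1 k = 0 := by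
        intro k hk _
        have hk' : k ∈ Icc 1 NT := hmem1 k (hS1 hk)
        rcases hy 1 k hk' with h | h
        · exact hxz 1 k hk' h
        · exact absurd ⟨k, Finset.mem_filter.mpr ⟨hk, h⟩⟩ hT1
      have hC1 : ∑ k ∈ Icc (l0 + 1) l1, x 1 k
          ≤ ∑ k ∈ Icc (l0 + 1) l1 \ S1, x 1 k :=
        sum_diff_ge (l0 + 1) l1 l1 S1 (x 1) le_rfl
          (fun k hk => hxnn 1 k (hmem1 k hk)) hz1
      by_cases hT2 : T2.Nonempty
      · set t := T2.min' hT2 with htdef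
        have htT : t ∈ T2 := Finset.min'_mem _ _
        obtain ⟨htS, hty⟩ := Finset.mem_filter.mp htT
        have htr' := mem_Icc.mp (hS2 htS)
        have hC2 : ∑ k ∈ Icc (l1 + 1) (t - 1), x 2 k
            ≤ ∑ k ∈ Icc (l1 + 1) l \ S2, x 2 k := by
          apply sum_diff_ge (l1 + 1) l (t - 1) S2 (x 2) (by omega)
            (fun k hk => hxnn 2 k (hmem2 k hk))
          intro k hk hkle
          have hk' : k ∈ Icc 1 NT := hmem2 k (hS2 hk)
          rcases hy 2 k hk' with h | h
          · exact hxz 2 k hk' h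
          · exfalso
            have : t ≤ k := Finset.min'_le _ _ (Finset.mem_filter.mpr ⟨hk, h⟩)
            have hk1 : 1 ≤ k := (mem_Icc.mp hk').1
            omega
        have hC3 : ∑ j ∈ Icc t l, d j ≤ ∑ k ∈ S2, (∑ j ∈ Icc k l, d j) * y 2 k := by
          have := Finset.single_le_sum
            (fun k hk => htermnn 2 k (hmem2 k (hS2 hk))) htS
          rwa [hty, mul_one] at this
        have hC4 : ∑ j ∈ Icc 1 (t - 1), d j
            ≤ ∑ k ∈ Icc 1 l0, x 0 k + ∑ k ∈ Icc (l0 + 1) l1, x 1 k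
              + ∑ k ∈ Icc (l1 + 1) (t - 1), x 2 k :=
          chain_flow NT d x s hs0 hbal0 hbal1 hbal2 hsnn
            l0 l1 (t - 1) (by omega) (by omega) (by omega)
        have hC5 : ∑ j ∈ Icc 1 (t - 1), d j + ∑ j ∈ Icc t l, d j
            = ∑ j ∈ Icc 1 l, d j := by
          have := icc_split (t - 1) l (by omega) d
          have ht1 : t - 1 + 1 = t := by omega
          rwa [ht1] at this
        linarith
      · have hz2 : ∀ k ∈ S2, k ≤ l → x 2 k = 0 := by
          intro k hk _
          have hk' : k ∈ Icc 1 NT := hmem2 k (hS2 hk)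
          rcases hy 2 k hk' with h | h
          · exact hxz 2 k hk' h
          · exact absurd ⟨k, Finset.mem_filter.mpr ⟨hk, h⟩⟩ hT2
        have hD1 : ∑ k ∈ Icc (l1 + 1) l, x 2 k
            ≤ ∑ k ∈ Icc (l1 + 1) l \ S2, x 2 k :=
          sum_diff_ge (l1 + 1) l l S2 (x 2) le_rfl
            (fun k hk => hxnn 2 k (hmem2 k hk)) hz2
        have hD2 : ∑ j ∈ Icc 1 l, d j
            ≤ ∑ k ∈ Icc 1 l0, x 0 k + ∑ k ∈ Icc (l0 + 1) l1, x 1 k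
              + ∑ k ∈ Icc (l1 + 1) l, x 2 k :=
          chain_flow NT d x s hs0 hbal0 hbal1 hbal2 hsnn
            l0 l1 l (by omega) (by omega) hlNT
        linarith
end

section
/- In the multi-commodity formulation of the three-level lot-sizing problem, suppose for retailer r and periods k < t the inequality d^r_t · Σ_{l=k}^{t-1} hc^r_l ≥ d^r_t · Σ_{l=k}^{t-1} hc^{δ_w(r)}_l + sc^r_t holds (storing demand d^r_t at the retailer from period k to t costs at least as much as storing it at the warehouse plus one retailer setup at t). Then for any feasible solution with w^{2r}_{k,t} = d^r_t, there exists another feasible solution of cost no greater in which w^{2r}_{k,t} = 0; consequently, fixing w^{2r}_{k,t} = 0 preserves the existence of an optimal solution. -/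
open Finset

/-- A point in the variable space of the multi-commodity formulation MC:
`w0 r k t`, `w1 r k t`, `w2 r k t` are the flows at levels 0, 1, 2 in period `k`
serving the demand `d r t`, and `sg0, sg1, sg2` the corresponding stocks. -/
structure MCPoint (I : LSData) where
  w0 : I.R → ℕ → ℕ → ℝ
  w1 : I.R → ℕ → ℕ → ℝ
  w2 : I.R → ℕ → ℕ → ℝ
  sg0 : I.R → ℕ → ℕ → ℝ
  sg1 : I.R → ℕ → ℕ → ℝ
  sg2 : I.R → ℕ → ℕ → ℝ
  yP : ℕ → ℝ
  yW : I.W → ℕ → ℝ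
  yR : I.R → ℕ → ℝ

/-- Feasibility for the multi-commodity formulation MC (binary setups). -/
def MCFeas (I : LSData) (p : MCPoint I) : Prop :=
  (∀ r, ∀ t ∈ Icc 1 I.NT, p.sg0 r 0 t = 0 ∧ p.sg1 r 0 t = 0 ∧ p.sg2 r 0 t = 0) ∧
  (∀ r, ∀ t ∈ Icc 1 I.NT, p.sg0 r t t = 0 ∧ p.sg1 r t t = 0 ∧ p.sg2 r t t = 0) ∧
  (∀ r, ∀ t ∈ Icc 1 I.NT, ∀ k ∈ Icc 1 t,
    p.sg0 r (k - 1) t + p.w0 r k t = p.w1 r k t + p.sg0 r k t) ∧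
  (∀ r, ∀ t ∈ Icc 1 I.NT, ∀ k ∈ Icc 1 t,
    p.sg1 r (k - 1) t + p.w1 r k t = p.w2 r k t + p.sg1 r k t) ∧
  (∀ r, ∀ t ∈ Icc 1 I.NT, ∀ k ∈ Icc 1 t,
    p.sg2 r (k - 1) t + p.w2 r k t = if k = t then I.d r t else p.sg2 r k t) ∧
  (∀ r, ∀ t ∈ Icc 1 I.NT, ∀ k ∈ Icc 1 t, p.w0 r k t ≤ I.d r t * p.yP k) ∧
  (∀ r, ∀ t ∈ Icc 1 I.NT, ∀ k ∈ Icc 1 t, p.w1 r k t ≤ I.d r t * p.yW (I.wOf r) k) ∧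
  (∀ r, ∀ t ∈ Icc 1 I.NT, ∀ k ∈ Icc 1 t, p.w2 r k t ≤ I.d r t * p.yR r k) ∧
  (∀ r, ∀ t ∈ Icc 1 I.NT, ∀ k ∈ Icc 1 t,
    0 ≤ p.w0 r k t ∧ 0 ≤ p.w1 r k t ∧ 0 ≤ p.w2 r k t ∧
    0 ≤ p.sg0 r k t ∧ 0 ≤ p.sg1 r k t ∧ 0 ≤ p.sg2 r k t) ∧
  (∀ t ∈ Icc 1 I.NT, p.yP t = 0 ∨ p.yP t = 1) ∧
  (∀ w, ∀ t ∈ Icc 1 I.NT, p.yW w t = 0 ∨ p.yW w t = 1) ∧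
  (∀ r, ∀ t ∈ Icc 1 I.NT, p.yR r t = 0 ∨ p.yR r t = 1)

/-- Total cost (setup plus holding) of a point of the MC formulation. -/
def MCCost (I : LSData) (p : MCPoint I) : ℝ :=
  (∑ t ∈ Icc 1 I.NT,
    (I.scP t * p.yP t + (∑ w, I.scW w t * p.yW w t) + (∑ r, I.scR r t * p.yR r t)))
  + ∑ r, ∑ t ∈ Icc 1 I.NT, ∑ k ∈ Icc 1 t,
      (I.hcP k * p.sg0 r k t + I.hcW (I.wOf r) k * p.sg1 r k t + I.hcR r k * p.sg2 r k t)

theorem ite_and12 {α : Sort*} {P Q X : Prop} [Decidable (P ∧ Q ∧ X)] (h : ¬(P ∧ Q)) (a b : α) :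
    (if P ∧ Q ∧ X then a else b) = b := if_neg fun hh => h ⟨hh.1, hh.2.1⟩

theorem sum_ite_eq_const {α β : Type*} [AddCommMonoid β] (s : Finset α) (b : α) (hb : b ∈ s)
    (c : β) [∀ a : α, Decidable (a = b)] : (∑ a ∈ s, if a = b then c else 0) = c := by
  rw [Finset.sum_eq_single_of_mem b hb (fun x _ hx => if_neg hx), if_pos rfl]

/-- Preprocessing for the multi-commodity formulation: if storing the demand `d r t`
at the retailer from period `k` up to `t` costs at least as much as storing it at the
warehouse plus one retailer setup at `t`, then any feasible solution with
`w2 r k t = d r t` can be replaced by a feasible solution of no greater cost in which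
`w2 r k t = 0`. -/
theorem mc_preprocessing (I : LSData) (r : I.R) (k t : ℕ)
    (hk1 : 1 ≤ k) (hkt : k < t) (ht : t ≤ I.NT)
    (hd : ∀ r' : I.R, ∀ t' : ℕ, 0 ≤ I.d r' t')
    (hsc : 0 ≤ I.scR r t)
    (hcost : I.d r t * (∑ l ∈ Icc k (t - 1), I.hcR r l)
      ≥ I.d r t * (∑ l ∈ Icc k (t - 1), I.hcW (I.wOf r) l) + I.scR r t)
    (p : MCPoint I) (hfeas : MCFeas I p) (hw : p.w2 r k t = I.d r t) :
    ∃ q : MCPoint I, MCFeas I q ∧ q.w2 r k t = 0 ∧ MCCost I q ≤ MCCost I p := by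
  classical
  obtain ⟨h1, h2, h3, h4, h5, h6, h7, h8, h9, h10, h11, h12⟩ := hfeas
  have hD0 : 0 ≤ I.d r t := hd r t
  have htS : t ∈ Icc 1 I.NT := by simp only [mem_Icc]; omega
  have hkt' : k ∈ Icc 1 t := by simp only [mem_Icc]; omega
  have hsg2ge : ∀ j, k ≤ j → j ≤ t - 1 → I.d r t ≤ p.sg2 r j t := by
    intro j hj1
    induction j, hj1 using Nat.le_induction with
    | base =>
      intro _
      have hc := h5 r t htS k hkt'
      rw [if_neg (by omega)] at hc
      have h0 : 0 ≤ p.sg2 r (k - 1) t := by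
        rcases Nat.lt_or_ge 1 k with h | h
        · exact (h9 r t htS (k - 1) (by simp only [mem_Icc]; omega)).2.2.2.2.2
        · have hk : k - 1 = 0 := by omega
          rw [hk]
          exact le_of_eq (h1 r t htS).2.2.symm
      linarith
    | succ j hj ih =>
      intro hj2
      have hc := h5 r t htS (j + 1) (by simp only [mem_Icc]; omega)
      rw [if_neg (by omega), Nat.add_sub_cancel] at hc
      have hwnn := (h9 r t htS (j + 1) (by simp only [mem_Icc]; omega)).2.2.1
      have := ih (by omega)
      linarith
  have hw2tt : p.w2 r t t = 0 := by
    have hc := h5 r t htS t (by simp only [mem_Icc]; omega)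
    rw [if_pos rfl] at hc
    have hge := hsg2ge (t - 1) (by omega) le_rfl
    have hwnn := (h9 r t htS t (by simp only [mem_Icc]; omega)).2.2.1
    linarith
  refine ⟨⟨p.w0, p.w1,
    fun r' k' t' => if r' = r ∧ t' = t ∧ k' = k then 0
      else if r' = r ∧ t' = t ∧ k' = t then p.w2 r' k' t' + I.d r t
      else p.w2 r' k' t',
    p.sg0,
    fun r' k' t' => if r' = r ∧ t' = t ∧ k ≤ k' ∧ k' ≤ t - 1 then p.sg1 r' k' t' + I.d r t
      else p.sg1 r' k' t',
    fun r' k' t' => if r' = r ∧ t' = t ∧ k ≤ k' ∧ k' ≤ t - 1 then p.sg2 r' k' t' - I.d r t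
      else p.sg2 r' k' t',
    p.yP, p.yW,
    fun r' t' => if r' = r ∧ t' = t then 1 else p.yR r' t'⟩, ?_, ?_, ?_⟩
  · unfold MCFeas
    refine ⟨?_, ?_, ?_, ?_, ?_, ?_, ?_, ?_, ?_, ?_, ?_, ?_⟩
    · intro r' t' ht'
      dsimp only
      refine ⟨(h1 r' t' ht').1, ?_, ?_⟩
      · rw [if_neg (fun h => by have := h.2.2.1; omega)]
        exact (h1 r' t' ht').2.1
      · rw [if_neg (fun h => by have := h.2.2.1; omega)]
        exact (h1 r' t' ht').2.2
    · intro r' t' ht'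
      dsimp only
      refine ⟨(h2 r' t' ht').1, ?_, ?_⟩
      · rw [if_neg (fun h => by have := h.2.1; have := h.2.2.2; omega)]
        exact (h2 r' t' ht').2.1
      · rw [if_neg (fun h => by have := h.2.1; have := h.2.2.2; omega)]
        exact (h2 r' t' ht').2.2
    · intro r' t' ht' k' hk'
      dsimp only
      exact h3 r' t' ht' k' hk'
    · intro r' t' ht' k' hk'
      dsimp only
      have horig := h4 r' t' ht' k' hk'
      by_cases hrt : r' = r ∧ t' = t
      · obtain ⟨hre, hte⟩ := hrt
        subst r'
        subst t'
        simp only [mem_Icc] at hk'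
        simp only [eq_self_iff_true, true_and]
        by_cases hBk : k' = k
        · subst k'
          rw [if_neg (fun h => by have := h.1; omega), if_pos rfl,
            if_pos (by omega : k ≤ k ∧ k ≤ t - 1)]
          linarith
        · by_cases hCt : k' = t
          · subst k'
            rw [if_pos (by omega : k ≤ t - 1 ∧ t - 1 ≤ t - 1), if_neg (by omega), if_pos rfl,
              if_neg (fun h => by have := h.2; omega)]
            linarith
          · rcases Nat.lt_or_ge k' k with h | h
            · rw [if_neg (fun hh => by have := hh.1; omega), if_neg (by omega), if_neg (by omega),
                if_neg (fun hh => by have := hh.1; omega)]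
              exact horig
            · rw [if_pos (by omega : k ≤ k' - 1 ∧ k' - 1 ≤ t - 1), if_neg (by omega),
                if_neg (by omega), if_pos (by omega : k ≤ k' ∧ k' ≤ t - 1)]
              linarith
      · simp only [ite_and12 hrt]
        exact horig
    · intro r' t' ht' k' hk'
      dsimp only
      have horig := h5 r' t' ht' k' hk'
      by_cases hrt : r' = r ∧ t' = t
      · obtain ⟨hre, hte⟩ := hrt
        subst r'
        subst t'
        simp only [mem_Icc] at hk'
        simp only [eq_self_iff_true, true_and]
        by_cases hBk : k' = k
        · subst k'
          rw [if_neg (by omega : ¬ k = t)] at horig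
          rw [if_neg (fun h => by have := h.1; omega), if_pos rfl, if_neg (by omega : ¬ k = t),
            if_pos (by omega : k ≤ k ∧ k ≤ t - 1)]
          linarith
        · by_cases hCt : k' = t
          · subst k'
            rw [if_pos rfl] at horig
            rw [if_pos (by omega : k ≤ t - 1 ∧ t - 1 ≤ t - 1), if_neg (by omega), if_pos rfl,
              if_pos rfl]
            linarith
          · rw [if_neg hCt] at horig
            rcases Nat.lt_or_ge k' k with h | h
            · rw [if_neg (fun hh => by have := hh.1; omega), if_neg (by omega), if_neg (by omega),
                if_neg hCt, if_neg (fun hh => by have := hh.1; omega)]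
              exact horig
            · rw [if_pos (by omega : k ≤ k' - 1 ∧ k' - 1 ≤ t - 1), if_neg (by omega),
                if_neg (by omega), if_neg hCt, if_pos (by omega : k ≤ k' ∧ k' ≤ t - 1)]
              linarith
      · simp only [ite_and12 hrt]
        exact horig
    · intro r' t' ht' k' hk'
      dsimp only
      exact h6 r' t' ht' k' hk'
    · intro r' t' ht' k' hk'
      dsimp only
      exact h7 r' t' ht' k' hk'
    · intro r' t' ht' k' hk'
      dsimp only
      have horig := h8 r' t' ht' k' hk'
      have hk'NT : k' ∈ Icc 1 I.NT := by
        simp only [mem_Icc] at hk' ht' ⊢; omega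
      have hyub : p.yR r' k' ≤ 1 := by
        rcases h12 r' k' hk'NT with h | h <;> rw [h] <;> norm_num
      have hynn : 0 ≤ p.yR r' k' := by
        rcases h12 r' k' hk'NT with h | h <;> rw [h] <;> norm_num
      by_cases hrt : r' = r ∧ t' = t
      · obtain ⟨hre, hte⟩ := hrt
        subst r'
        subst t'
        simp only [mem_Icc] at hk'
        simp only [eq_self_iff_true, true_and]
        by_cases hBk : k' = k
        · subst k'
          rw [if_pos rfl, if_neg (by omega : ¬ k = t)]
          exact mul_nonneg hD0 hynn
        · by_cases hCt : k' = t
          · subst k'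
            rw [if_neg (by omega), if_pos rfl, if_pos rfl]
            linarith
          · rw [if_neg hBk, if_neg hCt, if_neg hCt]
            exact horig
      · simp only [ite_and12 hrt]
        by_cases hy : r' = r ∧ k' = t
        · rw [if_pos hy]
          exact le_trans horig (mul_le_mul_of_nonneg_left hyub (hd r' t'))
        · rw [if_neg hy]
          exact horig
    · intro r' t' ht' k' hk'
      dsimp only
      obtain ⟨n0, n1, n2, n3, n4, n5⟩ := h9 r' t' ht' k' hk'
      refine ⟨n0, n1, ?_, n3, ?_, ?_⟩
      · split_ifs with hA hB
        · exact le_refl 0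
        · linarith
        · exact n2
      · split_ifs with hA
        · linarith
        · exact n4
      · split_ifs with hA
        · obtain ⟨hre, hte, hA3, hA4⟩ := hA
          subst r'
          subst t'
          have := hsg2ge k' hA3 hA4
          linarith
        · exact n5
    · intro t' ht'
      dsimp only
      exact h10 t' ht'
    · intro w t' ht'
      dsimp only
      exact h11 w t' ht'
    · intro r' t' ht'
      dsimp only
      split_ifs with hA
      · exact Or.inr rfl
      · exact h12 r' t' ht'
  · dsimp only
    rw [if_pos ⟨rfl, rfl, rfl⟩]
  · unfold MCCost
    dsimp only
    have hyRt := h12 r t htS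
    have eset : ∑ t' ∈ Icc 1 I.NT,
        (I.scP t' * p.yP t' + (∑ w, I.scW w t' * p.yW w t')
          + ∑ r', I.scR r' t' * (if r' = r ∧ t' = t then 1 else p.yR r' t'))
        = (∑ t' ∈ Icc 1 I.NT,
            (I.scP t' * p.yP t' + (∑ w, I.scW w t' * p.yW w t')
              + ∑ r', I.scR r' t' * p.yR r' t'))
          + I.scR r t * (1 - p.yR r t) := by
      have e1 : ∀ t' ∈ Icc 1 I.NT,
          (I.scP t' * p.yP t' + (∑ w, I.scW w t' * p.yW w t')
            + ∑ r', I.scR r' t' * (if r' = r ∧ t' = t then 1 else p.yR r' t'))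
          = (I.scP t' * p.yP t' + (∑ w, I.scW w t' * p.yW w t')
              + ∑ r', I.scR r' t' * p.yR r' t')
            + (if t' = t then I.scR r t * (1 - p.yR r t) else 0) := by
        intro t' _
        by_cases htt : t' = t
        · subst t'
          rw [if_pos rfl]
          have e2 : (∑ r', I.scR r' t * (if r' = r ∧ t = t then 1 else p.yR r' t))
              = (∑ r', (I.scR r' t * p.yR r' t
                  + if r' = r then I.scR r t * (1 - p.yR r t) else 0)) := by
            refine Finset.sum_congr rfl fun x _ => ?_
            by_cases hx : x = r
            · subst x
              simp only [eq_self_iff_true, and_self, if_true]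
              ring
            · simp only [hx, false_and, if_false, add_zero]
          rw [e2, Finset.sum_add_distrib, sum_ite_eq_const Finset.univ r (Finset.mem_univ r)]
          ring
        · simp only [htt, and_false, if_false, add_zero]
      rw [Finset.sum_congr rfl e1, Finset.sum_add_distrib,
        sum_ite_eq_const (Icc 1 I.NT) t htS]
    have ehold : (∑ r', ∑ t' ∈ Icc 1 I.NT, ∑ k' ∈ Icc 1 t',
          (I.hcP k' * p.sg0 r' k' t'
            + I.hcW (I.wOf r') k' *
              (if r' = r ∧ t' = t ∧ k ≤ k' ∧ k' ≤ t - 1 then p.sg1 r' k' t' + I.d r t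
                else p.sg1 r' k' t')
            + I.hcR r' k' *
              (if r' = r ∧ t' = t ∧ k ≤ k' ∧ k' ≤ t - 1 then p.sg2 r' k' t' - I.d r t
                else p.sg2 r' k' t')))
        = (∑ r', ∑ t' ∈ Icc 1 I.NT, ∑ k' ∈ Icc 1 t',
            (I.hcP k' * p.sg0 r' k' t' + I.hcW (I.wOf r') k' * p.sg1 r' k' t'
              + I.hcR r' k' * p.sg2 r' k' t'))
          + ∑ l ∈ Icc k (t - 1), (I.hcW (I.wOf r) l - I.hcR r l) * I.d r t := by
      have e1 : ∀ (r' : I.R) (t' k' : ℕ),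
          (I.hcP k' * p.sg0 r' k' t'
            + I.hcW (I.wOf r') k' *
              (if r' = r ∧ t' = t ∧ k ≤ k' ∧ k' ≤ t - 1 then p.sg1 r' k' t' + I.d r t
                else p.sg1 r' k' t')
            + I.hcR r' k' *
              (if r' = r ∧ t' = t ∧ k ≤ k' ∧ k' ≤ t - 1 then p.sg2 r' k' t' - I.d r t
                else p.sg2 r' k' t'))
          = (I.hcP k' * p.sg0 r' k' t' + I.hcW (I.wOf r') k' * p.sg1 r' k' t'
              + I.hcR r' k' * p.sg2 r' k' t')
            + (if r' = r ∧ t' = t ∧ k ≤ k' ∧ k' ≤ t - 1 then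
                (I.hcW (I.wOf r) k' - I.hcR r k') * I.d r t else 0) := by
        intro r' t' k'
        by_cases hc : r' = r ∧ t' = t ∧ k ≤ k' ∧ k' ≤ t - 1
        · rw [if_pos hc, if_pos hc, if_pos hc]
          obtain ⟨hre, hte, -, -⟩ := hc
          subst r'
          subst t'
          ring
        · rw [if_neg hc, if_neg hc, if_neg hc, add_zero]
      have e2 : ∀ (r' : I.R), ∀ t' ∈ Icc 1 I.NT,
          (∑ k' ∈ Icc 1 t', (if r' = r ∧ t' = t ∧ k ≤ k' ∧ k' ≤ t - 1 then
              (I.hcW (I.wOf r) k' - I.hcR r k') * I.d r t else 0))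
          = if r' = r ∧ t' = t then
              ∑ l ∈ Icc k (t - 1), (I.hcW (I.wOf r) l - I.hcR r l) * I.d r t else 0 := by
        intro r' t' _
        by_cases hc : r' = r ∧ t' = t
        · obtain ⟨hre, hte⟩ := hc
          subst r'
          subst t'
          rw [if_pos ⟨rfl, rfl⟩]
          simp only [eq_self_iff_true, true_and]
          rw [← Finset.sum_filter]
          congr 1
          ext x
          simp only [Finset.mem_filter, mem_Icc]
          omega
        · rw [if_neg hc]
          refine Finset.sum_eq_zero fun x _ => ?_
          rw [ite_and12 hc]
      have e3 : ∀ (r' : I.R), ∀ t' ∈ Icc 1 I.NT,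
          (∑ k' ∈ Icc 1 t',
            (I.hcP k' * p.sg0 r' k' t'
              + I.hcW (I.wOf r') k' *
                (if r' = r ∧ t' = t ∧ k ≤ k' ∧ k' ≤ t - 1 then p.sg1 r' k' t' + I.d r t
                  else p.sg1 r' k' t')
              + I.hcR r' k' *
                (if r' = r ∧ t' = t ∧ k ≤ k' ∧ k' ≤ t - 1 then p.sg2 r' k' t' - I.d r t
                  else p.sg2 r' k' t')))
          = (∑ k' ∈ Icc 1 t',
              (I.hcP k' * p.sg0 r' k' t' + I.hcW (I.wOf r') k' * p.sg1 r' k' t'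
                + I.hcR r' k' * p.sg2 r' k' t'))
            + (if r' = r ∧ t' = t then
                ∑ l ∈ Icc k (t - 1), (I.hcW (I.wOf r) l - I.hcR r l) * I.d r t else 0) := by
        intro r' t' ht'
        rw [Finset.sum_congr rfl (fun k' _ => e1 r' t' k'), Finset.sum_add_distrib,
          e2 r' t' ht']
      have e4 : ∀ (r' : I.R),
          (∑ t' ∈ Icc 1 I.NT, ∑ k' ∈ Icc 1 t',
            (I.hcP k' * p.sg0 r' k' t'
              + I.hcW (I.wOf r') k' *
                (if r' = r ∧ t' = t ∧ k ≤ k' ∧ k' ≤ t - 1 then p.sg1 r' k' t' + I.d r t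
                  else p.sg1 r' k' t')
              + I.hcR r' k' *
                (if r' = r ∧ t' = t ∧ k ≤ k' ∧ k' ≤ t - 1 then p.sg2 r' k' t' - I.d r t
                  else p.sg2 r' k' t')))
          = (∑ t' ∈ Icc 1 I.NT, ∑ k' ∈ Icc 1 t',
              (I.hcP k' * p.sg0 r' k' t' + I.hcW (I.wOf r') k' * p.sg1 r' k' t'
                + I.hcR r' k' * p.sg2 r' k' t'))
            + (if r' = r then
                ∑ l ∈ Icc k (t - 1), (I.hcW (I.wOf r) l - I.hcR r l) * I.d r t else 0) := by
        intro r'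
        rw [Finset.sum_congr rfl (e3 r'), Finset.sum_add_distrib]
        congr 1
        by_cases hr' : r' = r
        · subst r'
          rw [if_pos rfl]
          simp only [eq_self_iff_true, true_and]
          rw [sum_ite_eq_const (Icc 1 I.NT) t htS]
        · simp only [hr', false_and, if_false, Finset.sum_const_zero]
      rw [Finset.sum_congr rfl (fun r' _ => e4 r'), Finset.sum_add_distrib,
        sum_ite_eq_const Finset.univ r (Finset.mem_univ r)]
    rw [eset, ehold]
    have hsum : ∑ l ∈ Icc k (t - 1), (I.hcW (I.wOf r) l - I.hcR r l) * I.d r t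
        = I.d r t * (∑ l ∈ Icc k (t - 1), I.hcW (I.wOf r) l)
          - I.d r t * (∑ l ∈ Icc k (t - 1), I.hcR r l) := by
      simp only [sub_mul]
      rw [Finset.sum_sub_distrib, ← Finset.sum_mul, ← Finset.sum_mul]
      ring
    rcases hyRt with hy | hy
    · rw [hy]
      linarith
    · rw [hy]
      linarith
end

section
/- Consider a dicut collection Γ = {Γ^t}_{t ∈ 𝒯} for an uncapacitated fixed-charge network flow problem, where each Γ^t is a set of t-dicuts (arc sets whose removal disconnects source s from sink t). Let γ^t_{ij} be the number of t-dicuts in Γ^t containing arc (i,j), γ_{ij} = max_t γ^t_{ij}, and γ^t = |Γ^t|. Then every feasible solution satisfies Σ_{(i,j) ∈ F̄} γ_{ij} x_{ij} + Σ_{(i,j) ∈ F} Σ_{t ∈ 𝒯} d_t γ^t_{ij} y_{ij} ≥ Σ_{t ∈ 𝒯} γ^t d_t. -/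
open Finset


lemma chain_snoc {α : Type*} {R : α → α → Prop} :
    ∀ (l : List α) (a b : α), List.Chain R a l →
      R ((a :: l).getLast (List.cons_ne_nil a l)) b → List.Chain R a (l ++ [b])
  | [], a, b, _, h => by simpa [List.Chain] using h
  | c :: l, a, b, h, h2 => by
    rw [List.Chain, List.chain_cons] at h
    exact List.Chain.cons h.1 (chain_snoc l c b h.2 (by simpa using h2))

lemma zip_chain {α : Type*} {R : α → α → Prop} :
    ∀ (l : List α) (a : α), List.Chain R a l →
      ∀ e ∈ List.zip (a :: l) l, R e.1 e.2
  | [], _, _, e, he => by simp at he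
  | c :: l, a, h, e, he => by
    rw [List.Chain, List.chain_cons] at h
    rw [List.zip_cons_cons, List.mem_cons] at he
    rcases he with rfl | he
    · exact h.1
    · exact zip_chain l c h.2 e he

lemma reach_path {α : Type*} {R : α → α → Prop} {s u : α}
    (h : Relation.ReflTransGen R s u) :
    ∃ p : List α, List.Chain R s p ∧ (s :: p).getLast (List.cons_ne_nil s p) = u := by
  induction h with
  | refl => exact ⟨[], List.Chain.nil, rfl⟩
  | tail h1 h2 ih =>
    obtain ⟨p, hc, hl⟩ := ih
    refine ⟨p ++ [_], chain_snoc p s _ hc (hl ▸ h2), ?_⟩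
    simp [List.getLast_append]

lemma cut_lb {N : Type} [Fintype N] [DecidableEq N]
    (A : Finset (N × N)) (s t : N) (hst : s ≠ t) (d : ℝ)
    (g : N × N → ℝ) (hnn : ∀ a, 0 ≤ g a)
    (hcons : ∀ n : N,
      (∑ a ∈ A.filter (fun a => a.1 = n), g a)
        - (∑ a ∈ A.filter (fun a => a.2 = n), g a)
        = if n = s then d else if n = t then -d else 0)
    (C : Finset (N × N)) (hCA : C ⊆ A)
    (hcut : ∀ p : List N, List.Chain (fun u v => (u, v) ∈ A) s p →
      (s :: p).getLast (List.cons_ne_nil s p) = t →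
      ∃ e ∈ List.zip (s :: p) p, e ∈ C) :
    d ≤ ∑ a ∈ C, g a := by
  classical
  set r : N → N → Prop := fun u v => (u, v) ∈ A ∧ (u, v) ∉ C with hr
  set R : Finset N := univ.filter (fun u => Relation.ReflTransGen r s u) with hR
  have hsR : s ∈ R := by
    simp only [hR, mem_filter, mem_univ, true_and]
    exact Relation.ReflTransGen.refl
  have htR : t ∉ R := by
    simp only [hR, mem_filter, mem_univ, true_and]
    intro h
    obtain ⟨p, hc, hl⟩ := reach_path h
    obtain ⟨e, he, heC⟩ := hcut p (List.Chain.imp (fun u v h => h.1) hc) hl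
    exact (zip_chain p s hc e he).2 heC
  have hstep : ∀ a ∈ A, a.1 ∈ R → a.2 ∉ R → a ∈ C := by
    intro a ha h1 h2
    by_contra hC
    refine h2 ?_
    simp only [hR, mem_filter, mem_univ, true_and] at h1 ⊢
    exact h1.tail ⟨ha, hC⟩
  -- sum conservation over R
  have hsum : ∑ n ∈ R, ((∑ a ∈ A.filter (fun a => a.1 = n), g a)
      - (∑ a ∈ A.filter (fun a => a.2 = n), g a)) = d := by
    rw [Finset.sum_congr rfl (fun n _ => hcons n)]
    have key : ∀ n ∈ R, (if n = s then d else if n = t then -d else 0)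
        = if n = s then d else 0 := by
      intro n hn
      by_cases h1 : n = s
      · simp [h1]
      · have h2 : n ≠ t := fun h => htR (h ▸ hn)
        simp [h1, h2]
    rw [Finset.sum_congr rfl key, Finset.sum_ite_eq' R s (fun _ => d), if_pos hsR]
  -- fiberwise rewriting
  have hout : ∑ n ∈ R, ∑ a ∈ A.filter (fun a => a.1 = n), g a
      = ∑ a ∈ A.filter (fun a => a.1 ∈ R), g a :=
    Finset.sum_fiberwise_eq_sum_filter A R (fun a => a.1) g
  have hin : ∑ n ∈ R, ∑ a ∈ A.filter (fun a => a.2 = n), g a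
      = ∑ a ∈ A.filter (fun a => a.2 ∈ R), g a :=
    Finset.sum_fiberwise_eq_sum_filter A R (fun a => a.2) g
  rw [Finset.sum_sub_distrib, hout, hin] at hsum
  have e1 : ∑ a ∈ A.filter (fun a => a.1 ∈ R), g a
      = (∑ a ∈ A.filter (fun a => a.1 ∈ R ∧ a.2 ∈ R), g a)
        + ∑ a ∈ A.filter (fun a => a.1 ∈ R ∧ a.2 ∉ R), g a := by
    rw [← Finset.sum_filter_add_sum_filter_not (A.filter (fun a => a.1 ∈ R))
      (fun a => a.2 ∈ R), Finset.filter_filter, Finset.filter_filter]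
  have e2 : ∑ a ∈ A.filter (fun a => a.2 ∈ R), g a
      = (∑ a ∈ A.filter (fun a => a.1 ∈ R ∧ a.2 ∈ R), g a)
        + ∑ a ∈ A.filter (fun a => a.1 ∉ R ∧ a.2 ∈ R), g a := by
    rw [← Finset.sum_filter_add_sum_filter_not (A.filter (fun a => a.2 ∈ R))
      (fun a => a.1 ∈ R), Finset.filter_filter, Finset.filter_filter]
    congr 1
    · apply Finset.sum_congr _ (fun _ _ => rfl)
      apply Finset.filter_congr; intro a _; tauto
    · apply Finset.sum_congr _ (fun _ _ => rfl)
      apply Finset.filter_congr; intro a _; tauto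
  rw [e1, e2] at hsum
  have hd : d ≤ ∑ a ∈ A.filter (fun a => a.1 ∈ R ∧ a.2 ∉ R), g a := by
    rw [← hsum]
    have : 0 ≤ ∑ a ∈ A.filter (fun a => a.1 ∉ R ∧ a.2 ∈ R), g a :=
      Finset.sum_nonneg fun a _ => hnn a
    linarith
  refine hd.trans (Finset.sum_le_sum_of_subset_of_nonneg ?_ (fun a _ _ => hnn a))
  intro a ha
  rw [Finset.mem_filter] at ha
  exact hstep a ha.1 ha.2.1 ha.2.2


/-- Dicut collection inequalities (Rardin–Wolsey) are valid for the uncapacitated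
fixed-charge network flow problem. The flow is given per commodity (`f t` routes
`dem t` units from the source `s` to the sink `t`), `x` is the total flow, `Fc` is
the set of fixed-charge arcs, and `Γ t` is a collection of `t`-dicuts (arc sets
meeting every directed `s`–`t` path). -/
theorem dicut_collection_inequality
    (N : Type) [Fintype N] [DecidableEq N]
    (A Fc : Finset (N × N)) (hFc : Fc ⊆ A)
    (s : N) (T : Finset N) (hsT : s ∉ T)
    (dem : N → ℝ) (hdem : ∀ t ∈ T, 0 ≤ dem t)
    (x y : N × N → ℝ) (f : N → (N × N) → ℝ)
    (hsupp : ∀ t ∈ T, ∀ a : N × N, a ∉ A → f t a = 0)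
    (hfnn : ∀ t ∈ T, ∀ a : N × N, 0 ≤ f t a)
    (hcons : ∀ t ∈ T, ∀ n : N,
      (∑ a ∈ A.filter (fun a => a.1 = n), f t a)
          - (∑ a ∈ A.filter (fun a => a.2 = n), f t a)
        = if n = s then dem t else if n = t then -dem t else 0)
    (hx : ∀ a : N × N, x a = ∑ t ∈ T, f t a)
    (hy : ∀ a ∈ Fc, y a = 0 ∨ y a = 1)
    (hfix : ∀ a ∈ Fc, x a ≤ (∑ t ∈ T, dem t) * y a)
    (Γ : N → Finset (Finset (N × N)))
    (hΓ : ∀ t ∈ T, ∀ C ∈ Γ t, C ⊆ A ∧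
      ∀ p : List N, List.Chain (fun u v => (u, v) ∈ A) s p →
        (s :: p).getLast (List.cons_ne_nil s p) = t →
        ∃ e ∈ List.zip (s :: p) p, e ∈ C) :
    ∑ a ∈ A \ Fc, ((T.sup (fun t => ((Γ t).filter (fun C => a ∈ C)).card) : ℕ) : ℝ) * x a
      + ∑ a ∈ Fc, ∑ t ∈ T, dem t * (((Γ t).filter (fun C => a ∈ C)).card : ℝ) * y a
      ≥ ∑ t ∈ T, ((Γ t).card : ℝ) * dem t := by
  classical
  have hynn : ∀ a ∈ Fc, 0 ≤ y a := by
    intro a ha; rcases hy a ha with h | h <;> rw [h] <;> norm_num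
  -- key per-dicut inequality
  have key : ∀ t ∈ T, ∀ C ∈ Γ t,
      dem t ≤ (∑ a ∈ C \ Fc, f t a) + ∑ a ∈ C ∩ Fc, dem t * y a := by
    intro t ht C hC
    obtain ⟨hCA, hcut⟩ := hΓ t ht C hC
    have hts : s ≠ t := fun h => hsT (h ▸ ht)
    by_cases hopen : ∃ a ∈ C ∩ Fc, y a = 1
    · obtain ⟨a0, ha0, hy0⟩ := hopen
      have h1 : 0 ≤ ∑ a ∈ C \ Fc, f t a :=
        Finset.sum_nonneg fun a _ => hfnn t ht a
      have h2 : dem t ≤ ∑ a ∈ C ∩ Fc, dem t * y a := by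
        have hnn' : ∀ a ∈ C ∩ Fc, 0 ≤ dem t * y a := fun a ha =>
          mul_nonneg (hdem t ht) (hynn a (Finset.mem_inter.mp ha).2)
        calc dem t = dem t * y a0 := by rw [hy0, mul_one]
          _ ≤ ∑ a ∈ C ∩ Fc, dem t * y a := Finset.single_le_sum hnn' ha0
      linarith
    · push_neg at hopen
      have hzero : ∀ a ∈ C ∩ Fc, f t a = 0 := by
        intro a ha
        have haF : a ∈ Fc := (Finset.mem_inter.mp ha).2
        have hya : y a = 0 := (hy a haF).resolve_right (hopen a ha)
        have hxa : x a ≤ 0 := by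
          have := hfix a haF; rw [hya, mul_zero] at this; exact this
        have h1 : f t a ≤ x a := by
          rw [hx a]
          exact Finset.single_le_sum (fun t' ht' => hfnn t' ht' a) ht
        linarith [hfnn t ht a]
      have hle := cut_lb A s t hts (dem t) (f t) (hfnn t ht) (hcons t ht) C hCA hcut
      have hsplit : ∑ a ∈ C ∩ Fc, f t a + ∑ a ∈ C \ Fc, f t a = ∑ a ∈ C, f t a :=
        Finset.sum_inter_add_sum_sdiff C Fc (f t)
      have hz : ∑ a ∈ C ∩ Fc, f t a = 0 := Finset.sum_eq_zero hzero
      have h2 : 0 ≤ ∑ a ∈ C ∩ Fc, dem t * y a :=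
        Finset.sum_nonneg fun a ha =>
          mul_nonneg (hdem t ht) (hynn a (Finset.mem_inter.mp ha).2)
      linarith
  -- per-commodity inequality after double counting
  have pert : ∀ t ∈ T, ((Γ t).card : ℝ) * dem t ≤
      (∑ a ∈ A \ Fc, (((Γ t).filter (fun C => a ∈ C)).card : ℝ) * f t a)
        + ∑ a ∈ Fc, dem t * (((Γ t).filter (fun C => a ∈ C)).card : ℝ) * y a := by
    intro t ht
    have step1 : ((Γ t).card : ℝ) * dem t ≤
        ∑ C ∈ Γ t, ((∑ a ∈ C \ Fc, f t a) + ∑ a ∈ C ∩ Fc, dem t * y a) := by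
      rw [show ((Γ t).card : ℝ) * dem t = ∑ _C ∈ Γ t, dem t by
        rw [Finset.sum_const, nsmul_eq_mul]]
      exact Finset.sum_le_sum (key t ht)
    refine step1.trans_eq ?_
    rw [Finset.sum_add_distrib]
    congr 1
    · -- ∑ C, ∑ a ∈ C \ Fc = ∑ a ∈ A \ Fc, card * f
      have hCrw : ∀ C ∈ Γ t, ∑ a ∈ C \ Fc, f t a
          = ∑ a ∈ A \ Fc, if a ∈ C then f t a else 0 := by
        intro C hC
        rw [← Finset.sum_filter]
        congr 1
        ext a
        simp only [Finset.mem_filter, Finset.mem_sdiff]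
        constructor
        · rintro ⟨haC, haF⟩; exact ⟨⟨(hΓ t ht C hC).1 haC, haF⟩, haC⟩
        · rintro ⟨⟨_, haF⟩, haC⟩; exact ⟨haC, haF⟩
      rw [Finset.sum_congr rfl hCrw, Finset.sum_comm]
      refine Finset.sum_congr rfl fun a _ => ?_
      rw [← Finset.sum_filter, Finset.sum_const, nsmul_eq_mul]
    · have hCrw : ∀ C ∈ Γ t, ∑ a ∈ C ∩ Fc, dem t * y a
          = ∑ a ∈ Fc, if a ∈ C then dem t * y a else 0 := by
        intro C hC
        rw [← Finset.sum_filter]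
        congr 1
        ext a
        simp only [Finset.mem_filter, Finset.mem_inter]
        tauto
      rw [Finset.sum_congr rfl hCrw, Finset.sum_comm]
      refine Finset.sum_congr rfl fun a _ => ?_
      rw [← Finset.sum_filter, Finset.sum_const, nsmul_eq_mul]; ring
  -- sum over commodities
  have total := Finset.sum_le_sum pert
  rw [Finset.sum_add_distrib] at total
  rw [ge_iff_le]
  refine total.trans (add_le_add ?_ ?_)
  · rw [Finset.sum_comm]
    refine Finset.sum_le_sum fun a _ => ?_
    rw [hx a, Finset.mul_sum]
    refine Finset.sum_le_sum fun t ht => ?_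
    refine mul_le_mul_of_nonneg_right ?_ (hfnn t ht a)
    exact Nat.cast_le.mpr (Finset.le_sup (f := fun t => ((Γ t).filter (fun C => a ∈ C)).card) ht)
  · rw [Finset.sum_comm]
end

section
/- In the multi-commodity formulation, any feasible solution can be mapped to a feasible solution of the extended three-level formulation 3LF with the same objective value by setting x^{br}_k = Σ_{t=k}^{NT} w^{br}_{kt} and s^{br}_k = Σ_{t=k+1}^{NT} σ^{br}_{kt} for each level b ∈ {0,1,2}, retailer r, and period k; in particular the optimal value of the LP relaxation of MC is at least that of the LP relaxation of 3LF. -/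
open Finset

/-- Feasibility for the LP relaxation of the multi-commodity formulation MC. -/
def MCFeasLP (I : LSData) (p : MCPoint I) : Prop :=
  (∀ r, ∀ t ∈ Icc 1 I.NT, p.sg0 r 0 t = 0 ∧ p.sg1 r 0 t = 0 ∧ p.sg2 r 0 t = 0) ∧
  (∀ r, ∀ t ∈ Icc 1 I.NT, p.sg0 r t t = 0 ∧ p.sg1 r t t = 0 ∧ p.sg2 r t t = 0) ∧
  (∀ r, ∀ t ∈ Icc 1 I.NT, ∀ k ∈ Icc 1 t,
    p.sg0 r (k - 1) t + p.w0 r k t = p.w1 r k t + p.sg0 r k t) ∧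
  (∀ r, ∀ t ∈ Icc 1 I.NT, ∀ k ∈ Icc 1 t,
    p.sg1 r (k - 1) t + p.w1 r k t = p.w2 r k t + p.sg1 r k t) ∧
  (∀ r, ∀ t ∈ Icc 1 I.NT, ∀ k ∈ Icc 1 t,
    p.sg2 r (k - 1) t + p.w2 r k t = if k = t then I.d r t else p.sg2 r k t) ∧
  (∀ r, ∀ t ∈ Icc 1 I.NT, ∀ k ∈ Icc 1 t, p.w0 r k t ≤ I.d r t * p.yP k) ∧
  (∀ r, ∀ t ∈ Icc 1 I.NT, ∀ k ∈ Icc 1 t, p.w1 r k t ≤ I.d r t * p.yW (I.wOf r) k) ∧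
  (∀ r, ∀ t ∈ Icc 1 I.NT, ∀ k ∈ Icc 1 t, p.w2 r k t ≤ I.d r t * p.yR r k) ∧
  (∀ r, ∀ t ∈ Icc 1 I.NT, ∀ k ∈ Icc 1 t,
    0 ≤ p.w0 r k t ∧ 0 ≤ p.w1 r k t ∧ 0 ≤ p.w2 r k t ∧
    0 ≤ p.sg0 r k t ∧ 0 ≤ p.sg1 r k t ∧ 0 ≤ p.sg2 r k t) ∧
  (∀ t ∈ Icc 1 I.NT, 0 ≤ p.yP t ∧ p.yP t ≤ 1) ∧
  (∀ w, ∀ t ∈ Icc 1 I.NT, 0 ≤ p.yW w t ∧ p.yW w t ≤ 1) ∧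
  (∀ r, ∀ t ∈ Icc 1 I.NT, 0 ≤ p.yR r t ∧ p.yR r t ≤ 1)

/-- Objective function of the MC formulation. -/
def MCObj (I : LSData) (p : MCPoint I) : ℝ :=
  (∑ t ∈ Icc 1 I.NT,
    (I.scP t * p.yP t + (∑ w, I.scW w t * p.yW w t) + (∑ r, I.scR r t * p.yR r t)))
  + ∑ r, ∑ t ∈ Icc 1 I.NT, ∑ k ∈ Icc 1 t,
      (I.hcP k * p.sg0 r k t + I.hcW (I.wOf r) k * p.sg1 r k t + I.hcR r k * p.sg2 r k t)

/-- The mapping `x^{br}_k = Σ_{t=k}^{NT} w^{br}_{kt}`, `s^{br}_k = Σ_{t=k+1}^{NT} σ^{br}_{kt}`. -/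
def MCtoTLF (I : LSData) (p : MCPoint I) : TLFPoint I :=
  ⟨fun r k => ∑ t ∈ Icc k I.NT, p.w0 r k t,
   fun r k => ∑ t ∈ Icc k I.NT, p.w1 r k t,
   fun r k => ∑ t ∈ Icc k I.NT, p.w2 r k t,
   fun r k => ∑ t ∈ Icc (k + 1) I.NT, p.sg0 r k t,
   fun r k => ∑ t ∈ Icc (k + 1) I.NT, p.sg1 r k t,
   fun r k => ∑ t ∈ Icc (k + 1) I.NT, p.sg2 r k t,
   p.yP, p.yW, p.yR⟩

lemma sum_Icc_head {N k : ℕ} (hk : k ≤ N) (f : ℕ → ℝ) :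
    ∑ t ∈ Icc k N, f t = f k + ∑ t ∈ Icc (k + 1) N, f t := by
  rw [show Icc k N = insert k (Icc (k + 1) N) by
    ext x; simp only [mem_Icc, mem_insert]; omega]
  rw [Finset.sum_insert (by simp only [mem_Icc]; omega)]

lemma sum_Icc_drop {N k : ℕ} (hk : k ≤ N) (f : ℕ → ℝ) (h0 : f k = 0) :
    ∑ t ∈ Icc k N, f t = ∑ t ∈ Icc (k + 1) N, f t := by
  rw [sum_Icc_head hk, h0, zero_add]

lemma swap_sum (N : ℕ) (f : ℕ → ℕ → ℝ) :
    ∑ t ∈ Icc 1 N, ∑ k ∈ Icc 1 t, f k t = ∑ k ∈ Icc 1 N, ∑ t ∈ Icc k N, f k t :=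
  Finset.sum_comm' (by intro x y; simp only [mem_Icc]; omega)

/-- Every feasible MC solution maps to a feasible 3LF solution with the same
objective value; in particular the optimal value of the LP relaxation of MC is at
least that of the LP relaxation of 3LF. -/
theorem mc_maps_to_3lf (I : LSData)
    (hT : {v : ℝ | ∃ p : MCPoint I, MCFeasLP I p ∧ v = MCObj I p}.Nonempty)
    (hS : BddBelow {v : ℝ | ∃ q : TLFPoint I, TLFFeasLP I q ∧ v = TLFObj I q}) :
    (∀ p : MCPoint I, MCFeasLP I p →
      TLFFeasLP I (MCtoTLF I p) ∧ TLFObj I (MCtoTLF I p) = MCObj I p) ∧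
    sInf {v : ℝ | ∃ q : TLFPoint I, TLFFeasLP I q ∧ v = TLFObj I q}
      ≤ sInf {v : ℝ | ∃ p : MCPoint I, MCFeasLP I p ∧ v = MCObj I p} := by
  have main : ∀ p : MCPoint I, MCFeasLP I p →
      TLFFeasLP I (MCtoTLF I p) ∧ TLFObj I (MCtoTLF I p) = MCObj I p := by
    intro p hp
    obtain ⟨h1, h2, h3, h4, h5, h6, h7, h8, h9, h10, h11, h12⟩ := hp
    constructor
    · refine ⟨?_, ?_, ?_, ?_, ?_, ?_, ?_, ?_, h10, h11, h12⟩
      · intro r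
        exact ⟨Finset.sum_eq_zero fun t ht => (h1 r t ht).1,
          Finset.sum_eq_zero fun t ht => (h1 r t ht).2.1,
          Finset.sum_eq_zero fun t ht => (h1 r t ht).2.2⟩
      · intro r t ht
        simp only [mem_Icc] at ht
        show (∑ t' ∈ Icc (t - 1 + 1) I.NT, p.sg0 r (t - 1) t') + ∑ t' ∈ Icc t I.NT, p.w0 r t t'
            = (∑ t' ∈ Icc t I.NT, p.w1 r t t') + ∑ t' ∈ Icc (t + 1) I.NT, p.sg0 r t t'
        rw [show t - 1 + 1 = t by omega,
          ← sum_Icc_drop ht.2 (fun t' => p.sg0 r t t') ((h2 r t (by simp [mem_Icc]; omega)).1),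
          ← Finset.sum_add_distrib, ← Finset.sum_add_distrib]
        refine Finset.sum_congr rfl (fun t' ht' => ?_)
        simp only [mem_Icc] at ht'
        exact h3 r t' (by simp [mem_Icc]; omega) t (by simp [mem_Icc]; omega)
      · intro r t ht
        simp only [mem_Icc] at ht
        show (∑ t' ∈ Icc (t - 1 + 1) I.NT, p.sg1 r (t - 1) t') + ∑ t' ∈ Icc t I.NT, p.w1 r t t'
            = (∑ t' ∈ Icc t I.NT, p.w2 r t t') + ∑ t' ∈ Icc (t + 1) I.NT, p.sg1 r t t'
        rw [show t - 1 + 1 = t by omega,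
          ← sum_Icc_drop ht.2 (fun t' => p.sg1 r t t') ((h2 r t (by simp [mem_Icc]; omega)).2.1),
          ← Finset.sum_add_distrib, ← Finset.sum_add_distrib]
        refine Finset.sum_congr rfl (fun t' ht' => ?_)
        simp only [mem_Icc] at ht'
        exact h4 r t' (by simp [mem_Icc]; omega) t (by simp [mem_Icc]; omega)
      · intro r t ht
        simp only [mem_Icc] at ht
        show (∑ t' ∈ Icc (t - 1 + 1) I.NT, p.sg2 r (t - 1) t') + ∑ t' ∈ Icc t I.NT, p.w2 r t t'
            = I.d r t + ∑ t' ∈ Icc (t + 1) I.NT, p.sg2 r t t'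
        rw [show t - 1 + 1 = t by omega]
        have : (∑ t' ∈ Icc t I.NT, p.sg2 r (t - 1) t') + ∑ t' ∈ Icc t I.NT, p.w2 r t t'
            = ∑ t' ∈ Icc t I.NT, (if t = t' then I.d r t' else p.sg2 r t t') := by
          rw [← Finset.sum_add_distrib]
          refine Finset.sum_congr rfl (fun t' ht' => ?_)
          simp only [mem_Icc] at ht'
          have := h5 r t' (by simp [mem_Icc]; omega) t (by simp [mem_Icc]; omega)
          rw [this]
        rw [this, sum_Icc_head ht.2, if_pos rfl]
        congr 1
        refine Finset.sum_congr rfl (fun t' ht' => ?_)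
        simp only [mem_Icc] at ht'
        rw [if_neg (by omega)]
      · intro r t ht
        show ∑ t' ∈ Icc t I.NT, p.w0 r t t' ≤ I.dcR r t I.NT * p.yP t
        rw [LSData.dcR, Finset.sum_mul]
        refine Finset.sum_le_sum (fun t' ht' => ?_)
        simp only [mem_Icc] at ht ht'
        exact h6 r t' (by simp [mem_Icc]; omega) t (by simp [mem_Icc]; omega)
      · intro r t ht
        show ∑ t' ∈ Icc t I.NT, p.w1 r t t' ≤ I.dcR r t I.NT * p.yW (I.wOf r) t
        rw [LSData.dcR, Finset.sum_mul]
        refine Finset.sum_le_sum (fun t' ht' => ?_)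
        simp only [mem_Icc] at ht ht'
        exact h7 r t' (by simp [mem_Icc]; omega) t (by simp [mem_Icc]; omega)
      · intro r t ht
        show ∑ t' ∈ Icc t I.NT, p.w2 r t t' ≤ I.dcR r t I.NT * p.yR r t
        rw [LSData.dcR, Finset.sum_mul]
        refine Finset.sum_le_sum (fun t' ht' => ?_)
        simp only [mem_Icc] at ht ht'
        exact h8 r t' (by simp [mem_Icc]; omega) t (by simp [mem_Icc]; omega)
      · intro r t ht
        simp only [mem_Icc] at ht
        refine ⟨?_, ?_, ?_, ?_, ?_, ?_⟩
        · show 0 ≤ ∑ t' ∈ Icc t I.NT, p.w0 r t t'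
          refine Finset.sum_nonneg (fun t' ht' => ?_)
          simp only [mem_Icc] at ht'
          exact (h9 r t' (by simp [mem_Icc]; omega) t (by simp [mem_Icc]; omega)).1
        · show 0 ≤ ∑ t' ∈ Icc t I.NT, p.w1 r t t'
          refine Finset.sum_nonneg (fun t' ht' => ?_)
          simp only [mem_Icc] at ht'
          exact (h9 r t' (by simp [mem_Icc]; omega) t (by simp [mem_Icc]; omega)).2.1
        · show 0 ≤ ∑ t' ∈ Icc t I.NT, p.w2 r t t'
          refine Finset.sum_nonneg (fun t' ht' => ?_)
          simp only [mem_Icc] at ht'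
          exact (h9 r t' (by simp [mem_Icc]; omega) t (by simp [mem_Icc]; omega)).2.2.1
        · show 0 ≤ ∑ t' ∈ Icc (t + 1) I.NT, p.sg0 r t t'
          refine Finset.sum_nonneg (fun t' ht' => ?_)
          simp only [mem_Icc] at ht'
          exact (h9 r t' (by simp [mem_Icc]; omega) t (by simp [mem_Icc]; omega)).2.2.2.1
        · show 0 ≤ ∑ t' ∈ Icc (t + 1) I.NT, p.sg1 r t t'
          refine Finset.sum_nonneg (fun t' ht' => ?_)
          simp only [mem_Icc] at ht'
          exact (h9 r t' (by simp [mem_Icc]; omega) t (by simp [mem_Icc]; omega)).2.2.2.2.1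
        · show 0 ≤ ∑ t' ∈ Icc (t + 1) I.NT, p.sg2 r t t'
          refine Finset.sum_nonneg (fun t' ht' => ?_)
          simp only [mem_Icc] at ht'
          exact (h9 r t' (by simp [mem_Icc]; omega) t (by simp [mem_Icc]; omega)).2.2.2.2.2
    · -- objective equality
      have key : ∀ (hc : ℕ → ℝ) (sg : ℕ → ℕ → ℝ), (∀ k ∈ Icc 1 I.NT, sg k k = 0) →
          ∑ t ∈ Icc 1 I.NT, ∑ k ∈ Icc 1 t, hc k * sg k t
            = ∑ k ∈ Icc 1 I.NT, hc k * ∑ t ∈ Icc (k + 1) I.NT, sg k t := by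
        intro hc sg hz
        rw [swap_sum]
        refine Finset.sum_congr rfl (fun k hk => ?_)
        simp only [mem_Icc] at hk
        rw [Finset.mul_sum,
          sum_Icc_drop hk.2 (fun t => hc k * sg k t) (by simp [hz k (by simp [mem_Icc]; omega)])]
      have e0 : ∀ r, ∑ t ∈ Icc 1 I.NT, ∑ k ∈ Icc 1 t, I.hcP k * p.sg0 r k t
          = ∑ k ∈ Icc 1 I.NT, I.hcP k * ∑ t ∈ Icc (k + 1) I.NT, p.sg0 r k t :=
        fun r => key I.hcP (p.sg0 r) (fun k hk => (h2 r k hk).1)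
      have e1 : ∀ r, ∑ t ∈ Icc 1 I.NT, ∑ k ∈ Icc 1 t, I.hcW (I.wOf r) k * p.sg1 r k t
          = ∑ k ∈ Icc 1 I.NT, I.hcW (I.wOf r) k * ∑ t ∈ Icc (k + 1) I.NT, p.sg1 r k t :=
        fun r => key (I.hcW (I.wOf r)) (p.sg1 r) (fun k hk => (h2 r k hk).2.1)
      have e2 : ∀ r, ∑ t ∈ Icc 1 I.NT, ∑ k ∈ Icc 1 t, I.hcR r k * p.sg2 r k t
          = ∑ k ∈ Icc 1 I.NT, I.hcR r k * ∑ t ∈ Icc (k + 1) I.NT, p.sg2 r k t :=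
        fun r => key (I.hcR r) (p.sg2 r) (fun k hk => (h2 r k hk).2.2)
      show ∑ t ∈ Icc 1 I.NT,
          (I.scP t * p.yP t + (∑ w, I.scW w t * p.yW w t) + (∑ r, I.scR r t * p.yR r t)
            + (∑ r, I.hcP t * ∑ t' ∈ Icc (t + 1) I.NT, p.sg0 r t t')
            + (∑ r, I.hcW (I.wOf r) t * ∑ t' ∈ Icc (t + 1) I.NT, p.sg1 r t t')
            + (∑ r, I.hcR r t * ∑ t' ∈ Icc (t + 1) I.NT, p.sg2 r t t')) = MCObj I p
      rw [MCObj]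
      simp only [Finset.sum_add_distrib]
      have swaprt : ∀ g : I.R → ℕ → ℝ,
          ∑ t ∈ Icc 1 I.NT, ∑ r, g r t = ∑ r, ∑ t ∈ Icc 1 I.NT, g r t :=
        fun g => Finset.sum_comm
      rw [swaprt (fun r t => I.hcP t * ∑ t' ∈ Icc (t + 1) I.NT, p.sg0 r t t'),
        swaprt (fun r t => I.hcW (I.wOf r) t * ∑ t' ∈ Icc (t + 1) I.NT, p.sg1 r t t'),
        swaprt (fun r t => I.hcR r t * ∑ t' ∈ Icc (t + 1) I.NT, p.sg2 r t t')]
      rw [Finset.sum_congr rfl (fun r (_ : r ∈ Finset.univ) => e0 r),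
        Finset.sum_congr rfl (fun r (_ : r ∈ Finset.univ) => e1 r),
        Finset.sum_congr rfl (fun r (_ : r ∈ Finset.univ) => e2 r)]
      ring
  refine ⟨main, ?_⟩
  refine csInf_le_csInf hS hT ?_
  rintro v ⟨p, hp, rfl⟩
  exact ⟨MCtoTLF I p, (main p hp).1, (main p hp).2.symm⟩
end
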